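/- arXiv:1210.7628 — 2 statements merged into one kernel-verified Lean document; each statement's English description precedes it below -/
import Mathlib

section
/- Let $S$ be a self-adjoint realization of $\tau$ with separated boundary conditions and $\phi_z$ a real entire solution of $(\tau-z)u=0$ lying in the domain of $S$ near $a$. For $c\in(a,b)$ define $E(z,c) = \phi_z(c) + i\,\phi_z^{[1]}(c)$. Then for all $z,\zeta\in\mathbb{C}_+$, $\frac{E(z,c)\overline{E(\zeta,c)} - E(\bar\zeta,c)\overline{E(\bar z,c)}}{2i(\bar\zeta - z)} = \int_a^c \phi_z(x)\overline{\phi_\zeta(x)}\,r(x)\,dx$. In particular $|E(z,c)| > |E(\bar z, c)|$ for $z\in\mathbb{C}_+$, i.e., $E(\cdot,c)$ is a de Branges function. -/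
open MeasureTheory Set Filter Complex Topology ComplexConjugate

noncomputable section

/-- `f` is locally absolutely continuous on `(a,b)` with a.e. derivative `g`,
encoded via the integral representation. -/
def HasACDeriv (a b : ℝ) (f g : ℝ → ℂ) : Prop :=
  ∀ x ∈ Set.Ioo a b, ∀ y ∈ Set.Ioo a b,
    IntervalIntegrable g volume y x ∧ f x = f y + ∫ t in y..x, g t

/-- `f` lies in the domain `𝔇_τ` with first quasi-derivative `fq = p (f' + s f)` and
`τ f = w`, encoded via the equivalent first order system
`(f, f^{[1]})' = ((-s, 1/p), (q - 0·r, s)) (f, f^{[1]}) - (0, r·w)`. -/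
structure SLSys (a b : ℝ) (p q r s : ℝ → ℝ) (f fq w : ℝ → ℂ) : Prop where
  fst : HasACDeriv a b f fun x => fq x / (p x : ℂ) - (s x : ℂ) * f x
  snd : HasACDeriv a b fq fun x => (s x : ℂ) * fq x + (q x : ℂ) * f x - (r x : ℂ) * w x

/-- Standing hypothesis on the coefficients `p, q, r, s` on `(a,b)`:
real-valued and measurable, `p⁻¹, q, r, s ∈ L¹_loc((a,b))`, `p ≠ 0` and `r > 0` a.e. -/
structure SLHyp (a b : ℝ) (p q r s : ℝ → ℝ) : Prop where
  lt : a < b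
  mp : Measurable p
  mq : Measurable q
  mr : Measurable r
  ms : Measurable s
  ip : ∀ x ∈ Set.Ioo a b, ∀ y ∈ Set.Ioo a b,
    IntervalIntegrable (fun t => (p t)⁻¹) volume y x
  iq : ∀ x ∈ Set.Ioo a b, ∀ y ∈ Set.Ioo a b, IntervalIntegrable q volume y x
  ir : ∀ x ∈ Set.Ioo a b, ∀ y ∈ Set.Ioo a b, IntervalIntegrable r volume y x
  is' : ∀ x ∈ Set.Ioo a b, ∀ y ∈ Set.Ioo a b, IntervalIntegrable s volume y x
  pne : ∀ᵐ t ∂(volume.restrict (Set.Ioo a b)), p t ≠ 0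
  rpos : ∀ᵐ t ∂(volume.restrict (Set.Ioo a b)), 0 < r t

/-- The modified Wronskian `W(f,g)(x) = f(x) g^{[1]}(x) - f^{[1]}(x) g(x)`. -/
def Wr (f fq g gq : ℝ → ℂ) (x : ℝ) : ℂ := f x * gq x - fq x * g x
/-- A non-trivial real entire solution family `φ_z` of `(τ - z) u = 0` (with quasi-derivative
family `φq`) which lies in the domain of `S` near `a`: square integrable near `a`
w.r.t. `r dx` and satisfying the boundary condition at `a`, the latter encoded through
the vanishing at `a` of the Wronskians of members of the family. -/
structure RealEntireSolFam (a b : ℝ) (p q r s : ℝ → ℝ) (φ φq : ℂ → ℝ → ℂ) : Prop where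
  sol : ∀ z : ℂ, SLSys a b p q r s (φ z) (φq z) fun x => z * φ z x
  entire : ∀ x ∈ Set.Ioo a b,
    (Differentiable ℂ fun z => φ z x) ∧ Differentiable ℂ fun z => φq z x
  real : ∀ z : ℂ, ∀ x ∈ Set.Ioo a b,
    φ (conj z) x = conj (φ z x) ∧ φq (conj z) x = conj (φq z x)
  nontriv : ∀ z : ℂ, ∃ x ∈ Set.Ioo a b, φ z x ≠ 0 ∨ φq z x ≠ 0
  sqint : ∀ z : ℂ, ∀ c ∈ Set.Ioo a b,
    IntegrableOn (fun x => ‖φ z x‖ ^ 2 * r x) (Set.Ioo a c)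
  bc : ∀ z ζ : ℂ, Tendsto (Wr (φ z) (φq z) (φ ζ) (φq ζ)) (𝓝[>] a) (𝓝 0)

/-- The de Branges function `E(z,c) = φ_z(c) + i φ_z^{[1]}(c)`. -/
def dBE (φ φq : ℂ → ℝ → ℂ) (c : ℝ) (z : ℂ) : ℂ := φ z c + Complex.I * φq z c

namespace DeBrangesAux

open MeasureTheory

lemma cont_of_acd {a b : ℝ} {f g : ℝ → ℂ} (h : HasACDeriv a b f g) :
    ContinuousOn f (Set.Ioo a b) := by
  intro x₀ hx₀
  apply ContinuousAt.continuousWithinAt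
  obtain ⟨hax, hxb⟩ := hx₀
  have hx₀I : x₀ ∈ Set.Ioo a b := ⟨hax, hxb⟩
  set l := (a + x₀) / 2 with hl
  set u := (x₀ + b) / 2 with hu
  have h1 : a < l := by rw [hl]; linarith
  have h2 : l < x₀ := by rw [hl]; linarith
  have h3 : x₀ < u := by rw [hu]; linarith
  have h4 : u < b := by rw [hu]; linarith
  have hlI : l ∈ Set.Ioo a b := ⟨h1, by linarith⟩
  have huI : u ∈ Set.Ioo a b := ⟨by linarith, h4⟩
  have hlu : l ≤ u := by linarith
  have hint : IntervalIntegrable g volume l u := (h u huI l hlI).1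
  have hmem : x₀ ∈ Set.uIcc l u := by
    rw [Set.uIcc_of_le hlu]; exact ⟨h2.le, h3.le⟩
  have hcont : ContinuousAt (fun x => f x₀ + ∫ t in x₀..x, g t) x₀ := by
    refine ContinuousAt.add continuousAt_const ?_
    refine ((intervalIntegral.continuousOn_primitive_interval' hint hmem) x₀ hmem).continuousAt ?_
    rw [Set.uIcc_of_le hlu]
    exact Icc_mem_nhds h2 h3
  refine hcont.congr ?_
  filter_upwards [Ioo_mem_nhds h2 h3] with x hx
  exact ((h x ⟨h1.trans hx.1, hx.2.trans h4⟩ x₀ hx₀I).2).symm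

lemma inner_eq {y x t : ℝ} (ht : t ∈ Set.Ioc y x) (gA gB : ℝ → ℂ) :
    (∫ s in Set.Ioc y x, if s ≤ t then gB t * gA s else 0)
      = gB t * ∫ s in Set.Ioc y t, gA s := by
  have h1 : ∀ s : ℝ, (if s ≤ t then gB t * gA s else 0)
      = gB t * Set.indicator (Set.Iic t) gA s := by
    intro s
    by_cases hs : s ≤ t <;> simp [Set.indicator_apply, Set.mem_Iic, hs]
  simp_rw [h1]
  rw [MeasureTheory.integral_const_mul, MeasureTheory.setIntegral_indicator measurableSet_Iic,
    Set.Ioc_inter_Iic, min_eq_right ht.2]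

lemma prodint {y x : ℝ} {gA gB : ℝ → ℂ}
    (hA : MeasureTheory.IntegrableOn gA (Set.Ioc y x))
    (hB : MeasureTheory.IntegrableOn gB (Set.Ioc y x)) :
    MeasureTheory.Integrable (fun w : ℝ × ℝ => if w.2 ≤ w.1 then gB w.1 * gA w.2 else 0)
      ((volume.restrict (Set.Ioc y x)).prod (volume.restrict (Set.Ioc y x))) := by
  have base := hB.mul_prod hA
  have heq : (fun w : ℝ × ℝ => if w.2 ≤ w.1 then gB w.1 * gA w.2 else 0)
      = Set.indicator {w : ℝ × ℝ | w.2 ≤ w.1} (fun w => gB w.1 * gA w.2) := by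
    ext w
    by_cases hw : w.2 ≤ w.1 <;> simp [Set.indicator_apply, hw]
  rw [heq]
  exact base.indicator (measurableSet_le measurable_snd measurable_fst)

lemma inner_int {y x : ℝ} {gA gB : ℝ → ℂ}
    (hA : MeasureTheory.IntegrableOn gA (Set.Ioc y x))
    (hB : MeasureTheory.IntegrableOn gB (Set.Ioc y x)) :
    MeasureTheory.Integrable (fun t => gB t * ∫ s in Set.Ioc y t, gA s)
      (volume.restrict (Set.Ioc y x)) := by
  have h := (prodint hA hB).integral_prod_left
  refine h.congr ?_
  filter_upwards [MeasureTheory.ae_restrict_mem measurableSet_Ioc] with t ht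
  exact inner_eq ht gA gB


lemma prodRule {y x : ℝ} {g₁ g₂ : ℝ → ℂ}
    (h₁ : MeasureTheory.IntegrableOn g₁ (Set.Ioc y x))
    (h₂ : MeasureTheory.IntegrableOn g₂ (Set.Ioc y x)) :
    (∫ t in Set.Ioc y x, g₁ t) * (∫ t in Set.Ioc y x, g₂ t)
      = (∫ t in Set.Ioc y x, g₂ t * ∫ s in Set.Ioc y t, g₁ s)
        + ∫ t in Set.Ioc y x, g₁ t * ∫ s in Set.Ioc y t, g₂ s := by
  set μ := volume.restrict (Set.Ioc y x) with hμdef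
  have hA := prodint h₁ h₂
  have hB := prodint h₂ h₁
  have hA' : MeasureTheory.Integrable
      (fun w : ℝ × ℝ => if w.1 ≤ w.2 then g₁ w.1 * g₂ w.2 else 0) (μ.prod μ) := by
    have base := h₁.mul_prod h₂
    have heq : (fun w : ℝ × ℝ => if w.1 ≤ w.2 then g₁ w.1 * g₂ w.2 else 0)
        = Set.indicator {w : ℝ × ℝ | w.1 ≤ w.2} (fun w => g₁ w.1 * g₂ w.2) := by
      ext w
      by_cases hw : w.1 ≤ w.2 <;> simp [Set.indicator_apply, hw]
    rw [heq]
    exact base.indicator (measurableSet_le measurable_fst measurable_snd)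
  have eA : (∫ t in Set.Ioc y x, g₂ t * ∫ s in Set.Ioc y t, g₁ s)
      = ∫ w : ℝ × ℝ, (if w.2 ≤ w.1 then g₂ w.1 * g₁ w.2 else 0) ∂(μ.prod μ) := by
    rw [← MeasureTheory.integral_integral (f := fun t s' => if s' ≤ t then g₂ t * g₁ s' else 0) hA]
    refine MeasureTheory.integral_congr_ae ?_
    filter_upwards [MeasureTheory.ae_restrict_mem measurableSet_Ioc] with t ht
    exact (inner_eq ht g₁ g₂).symm
  have eB : (∫ t in Set.Ioc y x, g₁ t * ∫ s in Set.Ioc y t, g₂ s)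
      = ∫ w : ℝ × ℝ, (if w.2 ≤ w.1 then g₁ w.1 * g₂ w.2 else 0) ∂(μ.prod μ) := by
    rw [← MeasureTheory.integral_integral (f := fun t s' => if s' ≤ t then g₁ t * g₂ s' else 0) hB]
    refine MeasureTheory.integral_congr_ae ?_
    filter_upwards [MeasureTheory.ae_restrict_mem measurableSet_Ioc] with t ht
    exact (inner_eq ht g₂ g₁).symm
  have eswap : ∫ w : ℝ × ℝ, (if w.2 ≤ w.1 then g₂ w.1 * g₁ w.2 else 0) ∂(μ.prod μ)
      = ∫ w : ℝ × ℝ, (if w.1 ≤ w.2 then g₁ w.1 * g₂ w.2 else 0) ∂(μ.prod μ) := by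
    rw [← MeasureTheory.integral_prod_swap
      (fun w : ℝ × ℝ => if w.2 ≤ w.1 then g₂ w.1 * g₁ w.2 else 0)]
    refine MeasureTheory.integral_congr_ae (Filter.Eventually.of_forall fun w => ?_)
    by_cases hw : w.1 ≤ w.2 <;> simp [Prod.swap, hw, mul_comm]
  have hdiag : (μ.prod μ) {w : ℝ × ℝ | w.1 = w.2} = 0 := by
    rw [MeasureTheory.Measure.prod_apply (measurableSet_eq_fun measurable_fst measurable_snd)]
    have hfib : ∀ t : ℝ, μ (Prod.mk t ⁻¹' {w : ℝ × ℝ | w.1 = w.2}) = 0 := by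
      intro t
      have : Prod.mk t ⁻¹' {w : ℝ × ℝ | w.1 = w.2} = {t} := by
        ext w; simp [eq_comm]
      rw [this, hμdef, MeasureTheory.Measure.restrict_apply (measurableSet_singleton t)]
      exact measure_mono_null Set.inter_subset_left (Real.volume_singleton)
    simp [hfib]
  have hne : ∀ᵐ w : ℝ × ℝ ∂(μ.prod μ), w.1 ≠ w.2 := by
    rw [MeasureTheory.ae_iff]
    simpa using hdiag
  have hsum : (∫ w : ℝ × ℝ, (if w.1 ≤ w.2 then g₁ w.1 * g₂ w.2 else 0) ∂(μ.prod μ))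
      + (∫ w : ℝ × ℝ, (if w.2 ≤ w.1 then g₁ w.1 * g₂ w.2 else 0) ∂(μ.prod μ))
      = ∫ w : ℝ × ℝ, g₁ w.1 * g₂ w.2 ∂(μ.prod μ) := by
    rw [← MeasureTheory.integral_add hA' hB]
    refine MeasureTheory.integral_congr_ae ?_
    filter_upwards [hne] with w hw
    rcases lt_or_gt_of_ne hw with h | h
    · simp [h.le, h.not_ge]
    · simp [h.le, h.not_ge]
  rw [eA, eB, eswap, hsum, MeasureTheory.integral_prod_mul]


lemma lagrange {a b : ℝ} {p q r s : ℝ → ℝ} {z ζ : ℂ} {u uq v vq : ℝ → ℂ}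
    (hu : SLSys a b p q r s u uq fun x => z * u x)
    (hv : SLSys a b p q r s v vq fun x => ζ * v x)
    {y x : ℝ} (hy : y ∈ Set.Ioo a b) (hx : x ∈ Set.Ioo a b) (hyx : y ≤ x) :
    Wr u uq v vq x = Wr u uq v vq y
      + (z - ζ) * ∫ t in Set.Ioc y x, (r t : ℂ) * (u t * v t) := by
  set gu : ℝ → ℂ := fun t => uq t / (p t : ℂ) - (s t : ℂ) * u t with hgu
  set guq : ℝ → ℂ := fun t => (s t : ℂ) * uq t + (q t : ℂ) * u t - (r t : ℂ) * (z * u t)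
    with hguq
  set gv : ℝ → ℂ := fun t => vq t / (p t : ℂ) - (s t : ℂ) * v t with hgv
  set gvq : ℝ → ℂ := fun t => (s t : ℂ) * vq t + (q t : ℂ) * v t - (r t : ℂ) * (ζ * v t)
    with hgvq
  have hsub : Set.Icc y x ⊆ Set.Ioo a b := fun t ht =>
    ⟨lt_of_lt_of_le hy.1 ht.1, lt_of_le_of_lt ht.2 hx.2⟩
  have repru : ∀ t ∈ Set.Icc y x, u t = u y + ∫ w in Set.Ioc y t, gu w := by
    intro t ht
    have := (hu.fst t (hsub ht) y hy).2
    rwa [intervalIntegral.integral_of_le ht.1] at this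
  have repruq : ∀ t ∈ Set.Icc y x, uq t = uq y + ∫ w in Set.Ioc y t, guq w := by
    intro t ht
    have := (hu.snd t (hsub ht) y hy).2
    rwa [intervalIntegral.integral_of_le ht.1] at this
  have reprv : ∀ t ∈ Set.Icc y x, v t = v y + ∫ w in Set.Ioc y t, gv w := by
    intro t ht
    have := (hv.fst t (hsub ht) y hy).2
    rwa [intervalIntegral.integral_of_le ht.1] at this
  have reprvq : ∀ t ∈ Set.Icc y x, vq t = vq y + ∫ w in Set.Ioc y t, gvq w := by
    intro t ht
    have := (hv.snd t (hsub ht) y hy).2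
    rwa [intervalIntegral.integral_of_le ht.1] at this
  have Iu : MeasureTheory.IntegrableOn gu (Set.Ioc y x) :=
    (intervalIntegrable_iff_integrableOn_Ioc_of_le hyx).1 (hu.fst x hx y hy).1
  have Iuq : MeasureTheory.IntegrableOn guq (Set.Ioc y x) :=
    (intervalIntegrable_iff_integrableOn_Ioc_of_le hyx).1 (hu.snd x hx y hy).1
  have Iv : MeasureTheory.IntegrableOn gv (Set.Ioc y x) :=
    (intervalIntegrable_iff_integrableOn_Ioc_of_le hyx).1 (hv.fst x hx y hy).1
  have Ivq : MeasureTheory.IntegrableOn gvq (Set.Ioc y x) :=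
    (intervalIntegrable_iff_integrableOn_Ioc_of_le hyx).1 (hv.snd x hx y hy).1
  -- first pairing : u and vq
  have I₁ : MeasureTheory.Integrable
      (fun t => u y * gvq t + vq y * gu t) (volume.restrict (Set.Ioc y x)) :=
    (Ivq.const_mul (u y)).add (Iu.const_mul (vq y))
  have I₂ : MeasureTheory.Integrable
      (fun t => (gvq t * ∫ w in Set.Ioc y t, gu w) + gu t * ∫ w in Set.Ioc y t, gvq w)
      (volume.restrict (Set.Ioc y x)) := (inner_int Iu Ivq).add (inner_int Ivq Iu)
  have hae1 : (fun t => u t * gvq t + vq t * gu t)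
      =ᵐ[volume.restrict (Set.Ioc y x)]
      fun t => (u y * gvq t + vq y * gu t)
        + ((gvq t * ∫ w in Set.Ioc y t, gu w) + gu t * ∫ w in Set.Ioc y t, gvq w) := by
    filter_upwards [MeasureTheory.ae_restrict_mem measurableSet_Ioc] with t ht
    rw [repru t ⟨ht.1.le, ht.2⟩, reprvq t ⟨ht.1.le, ht.2⟩]
    ring
  have Iα : MeasureTheory.Integrable (fun t => u t * gvq t + vq t * gu t)
      (volume.restrict (Set.Ioc y x)) := (I₁.add I₂).congr hae1.symm
  have key1 : u x * vq x - u y * vq y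
      = ∫ t in Set.Ioc y x, (u t * gvq t + vq t * gu t) := by
    rw [MeasureTheory.integral_congr_ae hae1,
      MeasureTheory.integral_add I₁ I₂,
      MeasureTheory.integral_add (Ivq.const_mul (u y)) (Iu.const_mul (vq y)),
      MeasureTheory.integral_add (inner_int Iu Ivq) (inner_int Ivq Iu),
      MeasureTheory.integral_const_mul, MeasureTheory.integral_const_mul,
      ← prodRule Iu Ivq]
    rw [repru x ⟨hyx, le_rfl⟩, reprvq x ⟨hyx, le_rfl⟩]
    ring
  -- second pairing : uq and v
  have I₁' : MeasureTheory.Integrable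
      (fun t => uq y * gv t + v y * guq t) (volume.restrict (Set.Ioc y x)) :=
    (Iv.const_mul (uq y)).add (Iuq.const_mul (v y))
  have I₂' : MeasureTheory.Integrable
      (fun t => (gv t * ∫ w in Set.Ioc y t, guq w) + guq t * ∫ w in Set.Ioc y t, gv w)
      (volume.restrict (Set.Ioc y x)) := (inner_int Iuq Iv).add (inner_int Iv Iuq)
  have hae2 : (fun t => uq t * gv t + v t * guq t)
      =ᵐ[volume.restrict (Set.Ioc y x)]
      fun t => (uq y * gv t + v y * guq t)
        + ((gv t * ∫ w in Set.Ioc y t, guq w) + guq t * ∫ w in Set.Ioc y t, gv w) := by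
    filter_upwards [MeasureTheory.ae_restrict_mem measurableSet_Ioc] with t ht
    rw [repruq t ⟨ht.1.le, ht.2⟩, reprv t ⟨ht.1.le, ht.2⟩]
    ring
  have Iβ : MeasureTheory.Integrable (fun t => uq t * gv t + v t * guq t)
      (volume.restrict (Set.Ioc y x)) := (I₁'.add I₂').congr hae2.symm
  have key2 : uq x * v x - uq y * v y
      = ∫ t in Set.Ioc y x, (uq t * gv t + v t * guq t) := by
    rw [MeasureTheory.integral_congr_ae hae2,
      MeasureTheory.integral_add I₁' I₂',
      MeasureTheory.integral_add (Iv.const_mul (uq y)) (Iuq.const_mul (v y)),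
      MeasureTheory.integral_add (inner_int Iuq Iv) (inner_int Iv Iuq),
      MeasureTheory.integral_const_mul, MeasureTheory.integral_const_mul,
      ← prodRule Iuq Iv]
    rw [repruq x ⟨hyx, le_rfl⟩, reprv x ⟨hyx, le_rfl⟩]
    ring
  have hdiff : Wr u uq v vq x - Wr u uq v vq y
      = ∫ t in Set.Ioc y x,
          ((u t * gvq t + vq t * gu t) - (uq t * gv t + v t * guq t)) := by
    rw [MeasureTheory.integral_sub Iα Iβ, ← key1, ← key2]
    simp only [Wr]
    ring
  have hptw : ∀ t : ℝ, (u t * gvq t + vq t * gu t) - (uq t * gv t + v t * guq t)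
      = (z - ζ) * ((r t : ℂ) * (u t * v t)) := by
    intro t
    simp only [hgu, hguq, hgv, hgvq]
    ring
  rw [← sub_eq_iff_eq_add']
  rw [hdiff]
  simp_rw [hptw]
  rw [MeasureTheory.integral_const_mul]


lemma shrink {A c' : ℝ} (hAc : A < c') {k : ℝ → ℝ}
    (hk : MeasureTheory.IntegrableOn k (Set.Ioc A c')) :
    Filter.Tendsto (fun n : ℕ => ∫ t in Set.Ioc A (A + (c' - A) / (n + 1)), k t)
      Filter.atTop (𝓝 0) := by
  have hδpos : ∀ n : ℕ, 0 < (c' - A) / ((n : ℝ) + 1) := by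
    intro n
    apply div_pos (by linarith)
    positivity
  have hδle : ∀ n : ℕ, (c' - A) / ((n : ℝ) + 1) ≤ c' - A := by
    intro n
    apply div_le_self (by linarith)
    simp
  have hδ0 : Filter.Tendsto (fun n : ℕ => (c' - A) / ((n : ℝ) + 1)) Filter.atTop (𝓝 0) := by
    have := tendsto_one_div_add_atTop_nhds_zero_nat.const_mul (c' - A)
    simpa [mul_one_div, div_eq_mul_inv] using this
  have hmain := MeasureTheory.tendsto_integral_of_dominated_convergence
    (μ := volume.restrict (Set.Ioc A c'))
    (F := fun (n : ℕ) (t : ℝ) => Set.indicator (Set.Ioc A (A + (c' - A) / (n + 1))) k t)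
    (f := fun _ => (0 : ℝ)) (fun t => ‖k t‖)
    (fun n => hk.aestronglyMeasurable.indicator measurableSet_Ioc)
    hk.norm
    (fun n => Filter.Eventually.of_forall fun t => norm_indicator_le_norm_self k t)
    ?_
  · have hconv : ∀ n : ℕ,
        (∫ t, Set.indicator (Set.Ioc A (A + (c' - A) / (n + 1))) k t
          ∂(volume.restrict (Set.Ioc A c')))
        = ∫ t in Set.Ioc A (A + (c' - A) / (n + 1)), k t := by
      intro n
      rw [MeasureTheory.setIntegral_indicator measurableSet_Ioc,
        Set.inter_eq_self_of_subset_right (Set.Ioc_subset_Ioc_right (by linarith [hδle n]))]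
    have := hmain.congr hconv
    simpa using this
  · filter_upwards [MeasureTheory.ae_restrict_mem measurableSet_Ioc] with t ht
    have hev : ∀ᶠ n : ℕ in Filter.atTop, (c' - A) / ((n : ℝ) + 1) < t - A :=
      hδ0.eventually (gt_mem_nhds (by linarith [ht.1]))
    refine Filter.Tendsto.congr' ?_ tendsto_const_nhds
    filter_upwards [hev] with n hn
    have : t ∉ Set.Ioc A (A + (c' - A) / (n + 1)) := by
      intro hmem
      have := hmem.2
      linarith
    simp [Set.indicator_of_notMem this]

lemma tail_tendsto {A c : ℝ} (hAc : A < c) {h : ℝ → ℂ}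
    (hint : MeasureTheory.IntegrableOn h (Set.Ioo A c)) :
    Filter.Tendsto (fun y => ∫ t in Set.Ioc A y, ‖h t‖) (nhdsWithin A (Set.Ioi A)) (𝓝 0) := by
  set c' := (A + c) / 2 with hc'
  have h1 : A < c' := by rw [hc']; linarith
  have h2 : c' < c := by rw [hc']; linarith
  have hnorm : MeasureTheory.IntegrableOn (fun t => ‖h t‖) (Set.Ioo A c) := hint.norm
  have hIc' : MeasureTheory.IntegrableOn (fun t => ‖h t‖) (Set.Ioc A c') :=
    hnorm.mono_set (fun t ht => ⟨ht.1, lt_of_le_of_lt ht.2 h2⟩)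
  have hseq := shrink h1 hIc'
  rw [tendsto_order]
  constructor
  · intro w hw
    refine Filter.Eventually.of_forall fun y => lt_of_lt_of_le hw ?_
    exact MeasureTheory.setIntegral_nonneg measurableSet_Ioc fun t _ => norm_nonneg _
  · intro w hw
    obtain ⟨n, hn⟩ := (hseq.eventually (gt_mem_nhds hw)).exists
    have hy₀pos : A < A + (c' - A) / (n + 1) := by
      have : 0 < (c' - A) / ((n : ℝ) + 1) := by
        apply div_pos (by linarith); positivity
      linarith
    filter_upwards [Ioo_mem_nhdsGT_of_mem
      (⟨le_rfl, hy₀pos⟩ : A ∈ Set.Ico A (A + (c' - A) / (n + 1)))] with y hy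
    have hmono : (∫ t in Set.Ioc A y, ‖h t‖)
        ≤ ∫ t in Set.Ioc A (A + (c' - A) / (n + 1)), ‖h t‖ := by
      apply MeasureTheory.setIntegral_mono_set
      · exact hIc'.mono_set (Set.Ioc_subset_Ioc_right (by
          have : (c' - A) / ((n : ℝ) + 1) ≤ c' - A := by
            apply div_le_self (by linarith); simp
          linarith))
      · exact Filter.Eventually.of_forall fun t => norm_nonneg _
      · exact (Set.Ioc_subset_Ioc_right hy.2.le).eventuallyLE
    exact lt_of_le_of_lt hmono hn


lemma wronskian_eq {a b : ℝ} {p q r s : ℝ → ℝ} (hyp : SLHyp a b p q r s)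
    {φ φq : ℂ → ℝ → ℂ} (hφ : RealEntireSolFam a b p q r s φ φq)
    {c : ℝ} (hc : c ∈ Set.Ioo a b) (z ζ' : ℂ) :
    MeasureTheory.IntegrableOn (fun t => (r t : ℂ) * (φ z t * φ ζ' t)) (Set.Ioo a c) ∧
      Wr (φ z) (φq z) (φ ζ') (φq ζ') c
        = (z - ζ') * ∫ t in Set.Ioo a c, (r t : ℂ) * (φ z t * φ ζ' t) := by
  have hsubc : Set.Ioo a c ⊆ Set.Ioo a b := Set.Ioo_subset_Ioo_right hc.2.le
  have hcz : ContinuousOn (φ z) (Set.Ioo a b) := cont_of_acd (hφ.sol z).fst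
  have hcζ : ContinuousOn (φ ζ') (Set.Ioo a b) := cont_of_acd (hφ.sol ζ').fst
  -- integrability
  have hrpos : ∀ᵐ t ∂(volume.restrict (Set.Ioo a c)), 0 < r t :=
    MeasureTheory.ae_restrict_of_ae_restrict_of_subset hsubc hyp.rpos
  have hmeas : MeasureTheory.AEStronglyMeasurable (fun t => (r t : ℂ) * (φ z t * φ ζ' t))
      (volume.restrict (Set.Ioo a c)) := by
    refine MeasureTheory.AEStronglyMeasurable.mul ?_ ?_
    · exact (Complex.measurable_ofReal.comp hyp.mr).aestronglyMeasurable
    · exact ((hcz.mono hsubc).aestronglyMeasurable measurableSet_Ioo).mul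
        ((hcζ.mono hsubc).aestronglyMeasurable measurableSet_Ioo)
  have hdom : MeasureTheory.Integrable
      (fun t => (‖φ z t‖ ^ 2 * r t + ‖φ ζ' t‖ ^ 2 * r t) / 2)
      (volume.restrict (Set.Ioo a c)) :=
    ((hφ.sqint z c hc).add (hφ.sqint ζ' c hc)).div_const 2
  have hbd : ∀ᵐ t ∂(volume.restrict (Set.Ioo a c)),
      ‖(r t : ℂ) * (φ z t * φ ζ' t)‖ ≤ (‖φ z t‖ ^ 2 * r t + ‖φ ζ' t‖ ^ 2 * r t) / 2 := by
    filter_upwards [hrpos] with t htr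
    have h1 : ‖(r t : ℂ) * (φ z t * φ ζ' t)‖ = r t * (‖φ z t‖ * ‖φ ζ' t‖) := by
      simp [norm_mul, Complex.norm_real, abs_of_pos htr]
    rw [h1]
    nlinarith [sq_nonneg (‖φ z t‖ - ‖φ ζ' t‖), norm_nonneg (φ z t), norm_nonneg (φ ζ' t),
      htr.le, mul_nonneg (norm_nonneg (φ z t)) (norm_nonneg (φ ζ' t))]
  have hInt : MeasureTheory.IntegrableOn (fun t => (r t : ℂ) * (φ z t * φ ζ' t))
      (Set.Ioo a c) := MeasureTheory.Integrable.mono' hdom hmeas hbd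
  refine ⟨hInt, ?_⟩
  set h : ℝ → ℂ := fun t => (r t : ℂ) * (φ z t * φ ζ' t) with hh
  set I : ℂ := ∫ t in Set.Ioo a c, h t with hI
  have key : ∀ y ∈ Set.Ioo a c, Wr (φ z) (φq z) (φ ζ') (φq ζ') c
      = Wr (φ z) (φq z) (φ ζ') (φq ζ') y + (z - ζ') * ∫ t in Set.Ioc y c, h t :=
    fun y hy => lagrange (hφ.sol z) (hφ.sol ζ') ⟨hy.1, hy.2.trans hc.2⟩ hc hy.2.le
  have hsplit : ∀ y ∈ Set.Ioo a c,
      (∫ t in Set.Ioc a y, h t) + ∫ t in Set.Ioc y c, h t = I := by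
    intro y hy
    have h₁ : MeasureTheory.IntegrableOn h (Set.Ioc a y) :=
      hInt.mono_set fun t ht => ⟨ht.1, lt_of_le_of_lt ht.2 hy.2⟩
    have h₂ : MeasureTheory.IntegrableOn h (Set.Ioc y c) := by
      rw [integrableOn_Ioc_iff_integrableOn_Ioo]
      exact hInt.mono_set fun t ht => ⟨hy.1.trans ht.1, ht.2⟩
    have := (MeasureTheory.setIntegral_union (Set.Ioc_disjoint_Ioc_of_le le_rfl) measurableSet_Ioc
      h₁ h₂ (f := h)).symm
    rw [Set.Ioc_union_Ioc_eq_Ioc hy.1.le hy.2.le] at this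
    rw [this, hI]
    exact MeasureTheory.integral_Ioc_eq_integral_Ioo
  have lim2 : Filter.Tendsto (fun y => ∫ t in Set.Ioc y c, h t)
      (nhdsWithin a (Set.Ioi a)) (𝓝 I) := by
    rw [tendsto_iff_norm_sub_tendsto_zero]
    apply squeeze_zero' (g := fun y => ∫ t in Set.Ioc a y, ‖h t‖)
    · exact Filter.Eventually.of_forall fun y => norm_nonneg _
    · filter_upwards [Ioo_mem_nhdsGT_of_mem (⟨le_rfl, hc.1⟩ : a ∈ Set.Ico a c)] with y hy
      have : (∫ t in Set.Ioc y c, h t) - I = -(∫ t in Set.Ioc a y, h t) := by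
        rw [← hsplit y hy]; ring
      rw [this, norm_neg]
      exact MeasureTheory.norm_integral_le_integral_norm _
    · exact tail_tendsto hc.1 hInt
  have lim3 : Filter.Tendsto
      (fun y => Wr (φ z) (φq z) (φ ζ') (φq ζ') y + (z - ζ') * ∫ t in Set.Ioc y c, h t)
      (nhdsWithin a (Set.Ioi a)) (𝓝 (0 + (z - ζ') * I)) :=
    (hφ.bc z ζ').add (lim2.const_mul (z - ζ'))
  have evconst : (fun y => Wr (φ z) (φq z) (φ ζ') (φq ζ') y
        + (z - ζ') * ∫ t in Set.Ioc y c, h t)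
      =ᶠ[nhdsWithin a (Set.Ioi a)] fun _ => Wr (φ z) (φq z) (φ ζ') (φq ζ') c := by
    filter_upwards [Ioo_mem_nhdsGT_of_mem (⟨le_rfl, hc.1⟩ : a ∈ Set.Ico a c)] with y hy
    exact (key y hy).symm
  have := tendsto_nhds_unique (Filter.Tendsto.congr' evconst lim3) tendsto_const_nhds
  rw [← this, zero_add]


lemma cont_ae_zero {l u : ℝ} {f : ℝ → ℂ} (hf : ContinuousOn f (Set.Ioo l u))
    (h0 : ∀ᵐ t ∂(volume.restrict (Set.Ioo l u)), f t = 0) :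
    ∀ t ∈ Set.Ioo l u, f t = 0 := by
  intro t ht
  by_contra hne
  have hopen : IsOpen (Set.Ioo l u ∩ f ⁻¹' {(0 : ℂ)}ᶜ) :=
    hf.isOpen_inter_preimage isOpen_Ioo isOpen_compl_singleton
  have hmem : t ∈ Set.Ioo l u ∩ f ⁻¹' {(0 : ℂ)}ᶜ := ⟨ht, by simpa using hne⟩
  have hpos : 0 < volume (Set.Ioo l u ∩ f ⁻¹' {(0 : ℂ)}ᶜ) :=
    hopen.measure_pos volume ⟨t, hmem⟩
  have hzero : volume.restrict (Set.Ioo l u) {w | ¬ f w = 0} = 0 := MeasureTheory.ae_iff.1 h0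
  rw [MeasureTheory.Measure.restrict_apply' measurableSet_Ioo] at hzero
  have hsub : Set.Ioo l u ∩ f ⁻¹' {(0 : ℂ)}ᶜ ⊆ {w | ¬ f w = 0} ∩ Set.Ioo l u :=
    fun w hw => ⟨by simpa using hw.2, hw.1⟩
  exact hpos.ne' (measure_mono_null hsub hzero)

lemma ae_zero_of_int {l u : ℝ} {g : ℝ → ℂ}
    (hint : MeasureTheory.IntegrableOn g (Set.Ioc l u))
    (hval : ∀ w ∈ Set.Icc l u, ∫ t in Set.Ioc l w, g t = 0) :
    ∀ᵐ t ∂(volume.restrict (Set.Ioo l u)), g t = 0 := by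
  set g' : ℝ → ℂ := Set.indicator (Set.Ioc l u) g with hg'
  have hg'int : MeasureTheory.Integrable g' volume :=
    (MeasureTheory.integrable_indicator_iff measurableSet_Ioc).2 hint
  have hleb := IsUnifLocDoublingMeasure.ae_tendsto_average_norm_sub
    (μ := (volume : Measure ℝ)) hg'int.locallyIntegrable 1
  rw [MeasureTheory.ae_restrict_iff' measurableSet_Ioo]
  filter_upwards [hleb] with x hx hxI
  have havg : Filter.Tendsto (fun j : ℝ => ⨍ y in Metric.closedBall x j, ‖g' y - g' x‖)
      (nhdsWithin 0 (Set.Ioi 0)) (𝓝 0) := by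
    refine hx (fun _ => x) id tendsto_id ?_
    filter_upwards [self_mem_nhdsWithin] with j hj
    exact Metric.mem_closedBall_self (by simpa using le_of_lt (by simpa using hj))
  have hb : ∀ᶠ j in nhdsWithin (0 : ℝ) (Set.Ioi 0),
      ‖g x‖ ≤ 2 * ⨍ y in Metric.closedBall x j, ‖g' y - g' x‖ := by
    have hxu : (0 : ℝ) < u - x := by linarith [hxI.2]
    filter_upwards [Ioo_mem_nhdsGT_of_mem (⟨le_rfl, hxu⟩ : (0 : ℝ) ∈ Set.Ico 0 (u - x))]
      with j hj
    have hj0 : 0 < j := hj.1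
    have hjxu : x + j < u := by linarith [hj.2]
    have hsplit : ∫ t in Set.Ioc x (x + j), g t = 0 := by
      have h1 := hval x ⟨hxI.1.le, hxI.2.le⟩
      have h2 := hval (x + j) ⟨by linarith [hxI.1], by linarith⟩
      have hunion := MeasureTheory.setIntegral_union (f := g) (μ := volume)
        (Set.Ioc_disjoint_Ioc_of_le le_rfl) measurableSet_Ioc
        (hint.mono_set (Set.Ioc_subset_Ioc_right hxI.2.le))
        (hint.mono_set (Set.Ioc_subset_Ioc hxI.1.le hjxu.le))
      rw [Set.Ioc_union_Ioc_eq_Ioc hxI.1.le (by linarith : x ≤ x + j)] at hunion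
      rw [h2, h1] at hunion
      simpa using hunion.symm
    have hg'eq : ∫ t in Set.Ioc x (x + j), g' t = 0 := by
      rw [← hsplit]
      apply MeasureTheory.setIntegral_congr_fun measurableSet_Ioc
      intro t ht
      exact Set.indicator_of_mem
        (show t ∈ Set.Ioc l u from ⟨hxI.1.trans ht.1, ht.2.trans hjxu.le⟩) g
    have hconst : ∫ t in Set.Ioc x (x + j), (g' t - g' x) = -(j • g' x) := by
      rw [MeasureTheory.integral_sub hg'int.integrableOn (MeasureTheory.integrableOn_const
        (by rw [Real.volume_Ioc]; exact ENNReal.ofReal_ne_top))]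
      rw [hg'eq, MeasureTheory.setIntegral_const, MeasureTheory.measureReal_def, Real.volume_Ioc,
        ENNReal.toReal_ofReal (by linarith : (0:ℝ) ≤ x + j - x)]
      simp
    have hg'x : g' x = g x :=
      Set.indicator_of_mem (show x ∈ Set.Ioc l u from ⟨hxI.1, hxI.2.le⟩) g
    have hnormval : ‖∫ t in Set.Ioc x (x + j), (g' t - g' x)‖ = j * ‖g x‖ := by
      rw [hconst, norm_neg, norm_smul, Real.norm_of_nonneg hj0.le, hg'x]
    have hIcb : MeasureTheory.IntegrableOn (fun t => ‖g' t - g' x‖)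
        (Metric.closedBall x j) :=
      (hg'int.integrableOn.sub (MeasureTheory.integrableOn_const
        MeasureTheory.measure_closedBall_lt_top.ne)).norm
    have hnorm : j * ‖g x‖ ≤ ∫ t in Set.Ioc x (x + j), ‖g' t - g' x‖ :=
      hnormval ▸ MeasureTheory.norm_integral_le_integral_norm _
    have hsubset : Set.Ioc x (x + j) ⊆ Metric.closedBall x j := by
      intro t ht
      rw [Metric.mem_closedBall, Real.dist_eq]
      exact abs_le.2 ⟨by linarith [ht.1], by linarith [ht.2]⟩
    have hmono : (∫ t in Set.Ioc x (x + j), ‖g' t - g' x‖)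
        ≤ ∫ t in Metric.closedBall x j, ‖g' t - g' x‖ :=
      MeasureTheory.setIntegral_mono_set hIcb
        (Filter.Eventually.of_forall fun t => norm_nonneg _) hsubset.eventuallyLE
    have hballvol : (volume (Metric.closedBall x j)).toReal = 2 * j := by
      rw [Real.volume_closedBall, ENNReal.toReal_ofReal (by linarith)]
    have havg_eq : (∫ t in Metric.closedBall x j, ‖g' t - g' x‖)
        = (2 * j) * ⨍ y in Metric.closedBall x j, ‖g' y - g' x‖ := by
      rw [MeasureTheory.setAverage_eq, MeasureTheory.measureReal_def, hballvol]
      rw [smul_eq_mul, ← mul_assoc, mul_inv_cancel₀ (by linarith : (2:ℝ) * j ≠ 0), one_mul]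
    have hkey : j * ‖g x‖ ≤ j * (2 * ⨍ y in Metric.closedBall x j, ‖g' y - g' x‖) := by
      calc j * ‖g x‖ ≤ ∫ t in Set.Ioc x (x + j), ‖g' t - g' x‖ := hnorm
        _ ≤ ∫ t in Metric.closedBall x j, ‖g' t - g' x‖ := hmono
        _ = j * (2 * ⨍ y in Metric.closedBall x j, ‖g' y - g' x‖) := by
            rw [havg_eq]; ring
    exact le_of_mul_le_mul_left hkey hj0
  have hlim : Filter.Tendsto (fun j : ℝ => 2 * ⨍ y in Metric.closedBall x j, ‖g' y - g' x‖)
      (nhdsWithin 0 (Set.Ioi 0)) (𝓝 0) := by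
    have := havg.const_mul (2 : ℝ)
    simpa using this
  have : ‖g x‖ ≤ 0 := ge_of_tendsto hlim hb
  simpa using le_antisymm this (norm_nonneg _)


lemma gronwall {a b : ℝ} {p q r s : ℝ → ℝ} (hyp : SLHyp a b p q r s) {z : ℂ}
    {u uq : ℝ → ℂ} (hu : SLSys a b p q r s u uq fun x => z * u x)
    {c' x₁ : ℝ} (hc' : c' ∈ Set.Ioo a b) (hx₁ : x₁ ∈ Set.Ioo a b) (hle : c' ≤ x₁)
    (h0 : u c' = 0) (h0q : uq c' = 0) :
    ∀ x ∈ Set.Icc c' x₁, u x = 0 ∧ uq x = 0 := by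
  have hcu : ContinuousOn u (Set.Ioo a b) := cont_of_acd hu.fst
  have hcuq : ContinuousOn uq (Set.Ioo a b) := cont_of_acd hu.snd
  set gu : ℝ → ℂ := fun t => uq t / (p t : ℂ) - (s t : ℂ) * u t with hgu
  set guq : ℝ → ℂ := fun t => (s t : ℂ) * uq t + (q t : ℂ) * u t - (r t : ℂ) * (z * u t)
    with hguq
  set k : ℝ → ℝ := fun t => |(p t)⁻¹| + |s t| + (|q t| + ‖z‖ * |r t|) with hk
  set m : ℝ → ℝ := fun t => ‖u t‖ + ‖uq t‖ with hm
  have hknn : ∀ t, 0 ≤ k t := by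
    intro t
    have : 0 ≤ ‖z‖ * |r t| := mul_nonneg (norm_nonneg _) (abs_nonneg _)
    positivity
  have hmnn : ∀ t, 0 ≤ m t := fun t => add_nonneg (norm_nonneg _) (norm_nonneg _)
  have hmcont : ContinuousOn m (Set.Ioo a b) := (hcu.norm.add hcuq.norm)
  have hbu : ∀ t, ‖gu t‖ ≤ m t * k t := by
    intro t
    have e1 : ‖uq t / (p t : ℂ)‖ = |(p t)⁻¹| * ‖uq t‖ := by
      rw [norm_div, Complex.norm_real, Real.norm_eq_abs, abs_inv, div_eq_inv_mul]
    have e2 : ‖(s t : ℂ) * u t‖ = |s t| * ‖u t‖ := by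
      rw [norm_mul, Complex.norm_real, Real.norm_eq_abs]
    calc ‖gu t‖ ≤ ‖uq t / (p t : ℂ)‖ + ‖(s t : ℂ) * u t‖ := norm_sub_le _ _
      _ = |(p t)⁻¹| * ‖uq t‖ + |s t| * ‖u t‖ := by rw [e1, e2]
      _ ≤ m t * k t := by
          simp only [hm, hk]
          nlinarith [abs_nonneg ((p t)⁻¹), abs_nonneg (s t), abs_nonneg (q t),
            abs_nonneg (r t), norm_nonneg (u t), norm_nonneg (uq t), norm_nonneg z,
            mul_nonneg (norm_nonneg z) (abs_nonneg (r t)),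
            mul_nonneg (norm_nonneg (u t)) (abs_nonneg ((p t)⁻¹)),
            mul_nonneg (norm_nonneg (uq t)) (abs_nonneg (s t)),
            mul_nonneg (add_nonneg (norm_nonneg (u t)) (norm_nonneg (uq t)))
              (add_nonneg (abs_nonneg (q t)) (mul_nonneg (norm_nonneg z) (abs_nonneg (r t))))]
  have hbuq : ∀ t, ‖guq t‖ ≤ m t * k t := by
    intro t
    have e1 : ‖(s t : ℂ) * uq t‖ = |s t| * ‖uq t‖ := by
      rw [norm_mul, Complex.norm_real, Real.norm_eq_abs]
    have e2 : ‖(q t : ℂ) * u t‖ = |q t| * ‖u t‖ := by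
      rw [norm_mul, Complex.norm_real, Real.norm_eq_abs]
    have e3 : ‖(r t : ℂ) * (z * u t)‖ = |r t| * (‖z‖ * ‖u t‖) := by
      rw [norm_mul, norm_mul, Complex.norm_real, Real.norm_eq_abs]
    calc ‖guq t‖ ≤ ‖(s t : ℂ) * uq t + (q t : ℂ) * u t‖ + ‖(r t : ℂ) * (z * u t)‖ :=
          norm_sub_le _ _
      _ ≤ ‖(s t : ℂ) * uq t‖ + ‖(q t : ℂ) * u t‖ + ‖(r t : ℂ) * (z * u t)‖ := by
          have := norm_add_le ((s t : ℂ) * uq t) ((q t : ℂ) * u t)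
          linarith
      _ = |s t| * ‖uq t‖ + |q t| * ‖u t‖ + |r t| * (‖z‖ * ‖u t‖) := by rw [e1, e2, e3]
      _ ≤ m t * k t := by
          simp only [hm, hk]
          nlinarith [abs_nonneg ((p t)⁻¹), abs_nonneg (s t), abs_nonneg (q t),
            abs_nonneg (r t), norm_nonneg (u t), norm_nonneg (uq t), norm_nonneg z,
            mul_nonneg (norm_nonneg z) (abs_nonneg (r t)),
            mul_nonneg (norm_nonneg (uq t)) (abs_nonneg ((p t)⁻¹)),
            mul_nonneg (norm_nonneg (u t)) (abs_nonneg (s t)),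
            mul_nonneg (norm_nonneg (uq t)) (add_nonneg (abs_nonneg (q t))
              (mul_nonneg (norm_nonneg z) (abs_nonneg (r t))))]
  -- the set of total vanishing
  set Z : Set ℝ := {t | t ∈ Set.Icc c' x₁ ∧ ∀ w ∈ Set.Icc c' t, u w = 0 ∧ uq w = 0} with hZ
  have hc'Z : c' ∈ Z := by
    refine ⟨⟨le_rfl, hle⟩, ?_⟩
    intro w hw
    have : w = c' := le_antisymm hw.2 hw.1
    rw [this]
    exact ⟨h0, h0q⟩
  have hZne : Z.Nonempty := ⟨c', hc'Z⟩
  have hZb : BddAbove Z := ⟨x₁, fun t ht => ht.1.2⟩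
  set T := sSup Z with hT
  have hTge : c' ≤ T := le_csSup hZb hc'Z
  have hTle : T ≤ x₁ := csSup_le hZne fun t ht => ht.1.2
  have hIccsub : Set.Icc c' x₁ ⊆ Set.Ioo a b := fun t ht =>
    ⟨lt_of_lt_of_le hc'.1 ht.1, lt_of_le_of_lt ht.2 hx₁.2⟩
  have hTIoo : T ∈ Set.Ioo a b := hIccsub ⟨hTge, hTle⟩
  have hTZ : T ∈ Z := by
    refine ⟨⟨hTge, hTle⟩, ?_⟩
    intro w hw
    rcases eq_or_lt_of_le hw.2 with heq | hlt
    · -- w = T : use continuity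
      rcases eq_or_lt_of_le hw.1 with heq2 | hlt2
      · rw [← heq2]; exact ⟨h0, h0q⟩
      · -- c' < w = T
        rw [heq]
        have hlt2' : c' < T := heq ▸ hlt2
        have hvan : ∀ᶠ y in nhdsWithin T (Set.Iio T), u y = 0 ∧ uq y = 0 := by
          filter_upwards [Ioo_mem_nhdsLT_of_mem (⟨hlt2', le_rfl⟩ : T ∈ Set.Ioc c' T)]
            with y hy
          obtain ⟨t', ht'Z, hyt'⟩ := exists_lt_of_lt_csSup hZne hy.2
          exact ht'Z.2 y ⟨hy.1.le, hyt'.le⟩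
        have hcu' : Filter.Tendsto u (nhdsWithin T (Set.Iio T)) (𝓝 (u T)) :=
          ((hcu T hTIoo).continuousAt (isOpen_Ioo.mem_nhds hTIoo)).continuousWithinAt
        have hcuq' : Filter.Tendsto uq (nhdsWithin T (Set.Iio T)) (𝓝 (uq T)) :=
          ((hcuq T hTIoo).continuousAt (isOpen_Ioo.mem_nhds hTIoo)).continuousWithinAt
        constructor
        · exact tendsto_nhds_unique
            (Filter.Tendsto.congr' (by filter_upwards [hvan] with y hy; exact hy.1) hcu')
            tendsto_const_nhds
        · exact tendsto_nhds_unique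
            (Filter.Tendsto.congr' (by filter_upwards [hvan] with y hy; exact hy.2) hcuq')
            tendsto_const_nhds
    · obtain ⟨t', ht'Z, hyt'⟩ := exists_lt_of_lt_csSup hZne hlt
      exact ht'Z.2 w ⟨hw.1, hyt'.le⟩
  have hTeq : T = x₁ := by
    by_contra hne
    have hTlt : T < x₁ := lt_of_le_of_ne hTle hne
    have hkI : MeasureTheory.IntegrableOn k (Set.Ioc T x₁) := by
      have h1 := (hyp.ip x₁ hx₁ T hTIoo).abs
      have h2 := (hyp.is' x₁ hx₁ T hTIoo).abs
      have h3 := (hyp.iq x₁ hx₁ T hTIoo).abs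
      have h4 := (hyp.ir x₁ hx₁ T hTIoo).abs.const_mul ‖z‖
      exact (intervalIntegrable_iff_integrableOn_Ioc_of_le hTlt.le).1
        ((h1.add h2).add (h3.add h4))
    obtain ⟨n, hsmall⟩ := ((shrink hTlt hkI).eventually
      (gt_mem_nhds (by norm_num : (0:ℝ) < 1/4))).exists
    set δ : ℝ := (x₁ - T) / (n + 1) with hδ
    have hδpos : 0 < δ := by
      rw [hδ]; apply div_pos (by linarith); positivity
    have hδle : T + δ ≤ x₁ := by
      have : δ ≤ x₁ - T := by
        rw [hδ]; apply div_le_self (by linarith); simp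
      linarith
    set J : Set ℝ := Set.Icc T (T + δ) with hJ
    have hJsub : J ⊆ Set.Ioo a b := fun t ht =>
      ⟨lt_of_lt_of_le hTIoo.1 ht.1, lt_of_le_of_lt (ht.2.trans hδle) hx₁.2⟩
    have hJne : J.Nonempty := ⟨T, ⟨le_rfl, by linarith⟩⟩
    obtain ⟨t₀, ht₀J, ht₀max⟩ := isCompact_Icc.exists_isMaxOn hJne (hmcont.mono hJsub)
    set M := m t₀ with hM
    clear_value M
    have hMnn : 0 ≤ M := by rw [hM]; exact le_trans (hmnn T) (ht₀max ⟨le_rfl, by linarith⟩)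
    have huT : u T = 0 := (hTZ.2 T ⟨hTge, le_rfl⟩).1
    have huqT : uq T = 0 := (hTZ.2 T ⟨hTge, le_rfl⟩).2
    have hkIδ : MeasureTheory.IntegrableOn k (Set.Ioc T (T + δ)) :=
      hkI.mono_set (Set.Ioc_subset_Ioc_right hδle)
    have hmmeas : MeasureTheory.AEStronglyMeasurable m
        (volume.restrict (Set.Ioc T (T + δ))) :=
      (hmcont.mono (fun t ht => hJsub ⟨ht.1.le, ht.2⟩)).aestronglyMeasurable measurableSet_Ioc
    have hmbd : ∀ᵐ t ∂(volume.restrict (Set.Ioc T (T + δ))), ‖m t‖ ≤ M := by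
      filter_upwards [MeasureTheory.ae_restrict_mem measurableSet_Ioc] with t ht
      rw [Real.norm_of_nonneg (hmnn t), hM]
      exact ht₀max ⟨ht.1.le, ht.2⟩
    have hkm : MeasureTheory.IntegrableOn (fun t => m t * k t) (Set.Ioc T (T + δ)) :=
      MeasureTheory.Integrable.bdd_mul hkIδ hmmeas hmbd
    have Igu : MeasureTheory.IntegrableOn gu (Set.Ioc T x₁) :=
      (intervalIntegrable_iff_integrableOn_Ioc_of_le hTlt.le).1 (hu.fst x₁ hx₁ T hTIoo).1
    have Iguq : MeasureTheory.IntegrableOn guq (Set.Ioc T x₁) :=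
      (intervalIntegrable_iff_integrableOn_Ioc_of_le hTlt.le).1 (hu.snd x₁ hx₁ T hTIoo).1
    have hest : ∀ x ∈ J, m x ≤ M / 2 := by
      intro x hxJ
      have hxIoo : x ∈ Set.Ioo a b := hJsub hxJ
      have hsub1 : Set.Ioc T x ⊆ Set.Ioc T (T + δ) := Set.Ioc_subset_Ioc_right hxJ.2
      have hsub2 : Set.Ioc T x ⊆ Set.Ioc T x₁ :=
        Set.Ioc_subset_Ioc_right (hxJ.2.trans hδle)
      have hux : u x = ∫ t in Set.Ioc T x, gu t := by
        have := (hu.fst x hxIoo T hTIoo).2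
        rw [intervalIntegral.integral_of_le hxJ.1, huT, zero_add] at this
        exact this
      have huqx : uq x = ∫ t in Set.Ioc T x, guq t := by
        have := (hu.snd x hxIoo T hTIoo).2
        rw [intervalIntegral.integral_of_le hxJ.1, huqT, zero_add] at this
        exact this
      have hbound : ∀ (gf : ℝ → ℂ), MeasureTheory.IntegrableOn gf (Set.Ioc T x₁) →
          (∀ t, ‖gf t‖ ≤ m t * k t) →
          ‖∫ t in Set.Ioc T x, gf t‖ ≤ M * (1/4) := by
        intro gf hgfI hgfb
        have hgfn : MeasureTheory.IntegrableOn (fun t => ‖gf t‖) (Set.Ioc T x₁) := hgfI.norm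
        calc ‖∫ t in Set.Ioc T x, gf t‖ ≤ ∫ t in Set.Ioc T x, ‖gf t‖ :=
              MeasureTheory.norm_integral_le_integral_norm _
          _ ≤ ∫ t in Set.Ioc T x, m t * k t := by
              apply MeasureTheory.setIntegral_mono_on
                (hgfn.mono_set hsub2) (hkm.mono_set hsub1) measurableSet_Ioc
              intro t _
              exact hgfb t
          _ ≤ ∫ t in Set.Ioc T (T + δ), m t * k t := by
              apply MeasureTheory.setIntegral_mono_set hkm
              · exact Filter.Eventually.of_forall fun t => mul_nonneg (hmnn t) (hknn t)
              · exact hsub1.eventuallyLE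
          _ ≤ ∫ t in Set.Ioc T (T + δ), M * k t := by
              apply MeasureTheory.setIntegral_mono_on hkm (hkIδ.const_mul M) measurableSet_Ioc
              intro t ht
              rw [hM]
              exact mul_le_mul_of_nonneg_right (ht₀max ⟨ht.1.le, ht.2⟩) (hknn t)
          _ = M * ∫ t in Set.Ioc T (T + δ), k t := MeasureTheory.integral_const_mul M _
          _ ≤ M * (1/4) := mul_le_mul_of_nonneg_left hsmall.le hMnn
      have h1 := hbound gu Igu hbu
      have h2 := hbound guq Iguq hbuq
      rw [← hux] at h1
      rw [← huqx] at h2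
      simp only [hm]
      linarith
    have hM0 : M = 0 := by
      have h' : M ≤ M / 2 := by rw [hM]; exact (hM ▸ hest t₀ ht₀J)
      linarith
    have hvanJ : ∀ x ∈ J, u x = 0 ∧ uq x = 0 := by
      intro x hxJ
      have h1 := hest x hxJ
      rw [hM0] at h1
      have h2 := hmnn x
      simp only [hm] at h1 h2
      constructor
      · exact norm_eq_zero.1 (le_antisymm (by linarith [norm_nonneg (uq x)]) (norm_nonneg _))
      · exact norm_eq_zero.1 (le_antisymm (by linarith [norm_nonneg (u x)]) (norm_nonneg _))
    have hTδZ : T + δ ∈ Z := by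
      refine ⟨⟨by linarith, hδle⟩, ?_⟩
      intro w hw
      rcases le_total w T with h | h
      · exact hTZ.2 w ⟨hw.1, h⟩
      · exact hvanJ w ⟨h, hw.2⟩
    have : T + δ ≤ T := le_csSup hZb hTδZ
    linarith
  intro x hx
  rw [← hTeq] at hx
  exact hTZ.2 x hx

end DeBrangesAux

open DeBrangesAux

/-- The basic identity for the de Branges function `E(z,c) = φ_z(c) + i φ_z^{[1]}(c)`;
in particular `E(·,c)` is a de Branges function: `|E(z,c)| > |E(conj z, c)|` on `ℂ₊`. -/
theorem deBranges_function_identity {a b : ℝ} {p q r s : ℝ → ℝ}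
    (hyp : SLHyp a b p q r s) {φ φq : ℂ → ℝ → ℂ}
    (hφ : RealEntireSolFam a b p q r s φ φq) {c : ℝ} (hc : c ∈ Set.Ioo a b) :
    (∀ z ζ : ℂ, 0 < z.im → 0 < ζ.im →
      (dBE φ φq c z * conj (dBE φ φq c ζ) - dBE φ φq c (conj ζ) * conj (dBE φ φq c (conj z)))
          / (2 * Complex.I * (conj ζ - z))
        = ∫ x in Set.Ioo a c, φ z x * conj (φ ζ x) * (r x : ℂ)) ∧
    ∀ z : ℂ, 0 < z.im → ‖dBE φ φq c (conj z)‖ < ‖dBE φ φq c z‖ := by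
  have hac : a < c := hc.1
  have hsubc : Set.Ioo a c ⊆ Set.Ioo a b := Set.Ioo_subset_Ioo_right hc.2.le
  have hreal := hφ.real
  have hid : ∀ z ζ : ℂ,
      dBE φ φq c z * conj (dBE φ φq c ζ) - dBE φ φq c (conj ζ) * conj (dBE φ φq c (conj z))
        = -(2 * Complex.I)
          * ((z - conj ζ) * ∫ x in Set.Ioo a c, (r x : ℂ) * (φ z x * φ (conj ζ) x)) := by
    intro z ζ
    have hW := (wronskian_eq hyp hφ hc z (conj ζ)).2
    have h1 := (hreal ζ c hc).1
    have h2 := (hreal ζ c hc).2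
    have h3 : conj (φ (conj z) c) = φ z c := by
      rw [(hreal z c hc).1, Complex.conj_conj]
    have h4 : conj (φq (conj z) c) = φq z c := by
      rw [(hreal z c hc).2, Complex.conj_conj]
    rw [← hW]
    simp only [dBE, Wr, map_add, map_mul, Complex.conj_conj, Complex.conj_I, h1, h2, h3, h4]
    ring
  constructor
  · intro z ζ hz hζ
    have hden : (2 : ℂ) * Complex.I * (conj ζ - z) ≠ 0 := by
      apply mul_ne_zero (by simp [Complex.I_ne_zero])
      intro h
      have := congrArg Complex.im h
      simp [Complex.sub_im, Complex.conj_im] at this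
      linarith
    have e1 : (∫ x in Set.Ioo a c, (r x : ℂ) * (φ z x * φ (conj ζ) x))
        = ∫ x in Set.Ioo a c, φ z x * conj (φ ζ x) * (r x : ℂ) := by
      refine MeasureTheory.integral_congr_ae ?_
      filter_upwards [MeasureTheory.ae_restrict_mem measurableSet_Ioo] with t htI
      rw [(hreal ζ t (hsubc htI)).1]
      ring
    rw [div_eq_iff hden, ← e1, hid z ζ]
    ring
  · intro z hz
    have hWpair := wronskian_eq hyp hφ hc z (conj z)
    have hid' := hid z z
    have hRe : (∫ x in Set.Ioo a c, (r x : ℂ) * (φ z x * φ (conj z) x))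
        = ((∫ x in Set.Ioo a c, ‖φ z x‖ ^ 2 * r x : ℝ) : ℂ) := by
      have hcast : (∫ x in Set.Ioo a c, ((‖φ z x‖ ^ 2 * r x : ℝ) : ℂ))
          = ((∫ x in Set.Ioo a c, ‖φ z x‖ ^ 2 * r x : ℝ) : ℂ) := integral_ofReal (𝕜 := ℂ)
      rw [← hcast]
      refine MeasureTheory.integral_congr_ae ?_
      filter_upwards [MeasureTheory.ae_restrict_mem measurableSet_Ioo] with t htI
      rw [(hreal z t (hsubc htI)).1, Complex.mul_conj]
      rw [Complex.normSq_eq_norm_sq]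
      push_cast
      ring
    set R : ℝ := ∫ x in Set.Ioo a c, ‖φ z x‖ ^ 2 * r x with hR
    have hrpos : ∀ᵐ t ∂(volume.restrict (Set.Ioo a c)), 0 < r t :=
      MeasureTheory.ae_restrict_of_ae_restrict_of_subset hsubc hyp.rpos
    have hRnonnegae : 0 ≤ᵐ[volume.restrict (Set.Ioo a c)] fun x => ‖φ z x‖ ^ 2 * r x := by
      filter_upwards [hrpos] with t htr
      exact mul_nonneg (by positivity) htr.le
    have hRint : MeasureTheory.IntegrableOn (fun x => ‖φ z x‖ ^ 2 * r x) (Set.Ioo a c) :=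
      hφ.sqint z c hc
    have hRpos : 0 < R := by
      rcases lt_or_eq_of_le (MeasureTheory.integral_nonneg_of_ae hRnonnegae) with h | h
      · exact h
      · exfalso
        have hzero := (MeasureTheory.integral_eq_zero_iff_of_nonneg_ae hRnonnegae hRint).1 h.symm
        have hφ0ae : ∀ᵐ t ∂(volume.restrict (Set.Ioo a c)), φ z t = 0 := by
          filter_upwards [hzero, hrpos] with t h1 h2
          have h3 : ‖φ z t‖ ^ 2 * r t = 0 := h1
          have h4 : ‖φ z t‖ ^ 2 = 0 := by
            rcases mul_eq_zero.1 h3 with h | h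
            · exact h
            · exact absurd h h2.ne'
          have := (pow_eq_zero_iff two_ne_zero).mp h4
          exact norm_eq_zero.1 this
        have hcz : ContinuousOn (φ z) (Set.Ioo a b) := cont_of_acd (hφ.sol z).fst
        have hczq : ContinuousOn (φq z) (Set.Ioo a b) := cont_of_acd (hφ.sol z).snd
        have hφ0 : ∀ t ∈ Set.Ioo a c, φ z t = 0 :=
          cont_ae_zero (hcz.mono hsubc) hφ0ae
        have hφq0 : ∀ t ∈ Set.Ioo a c, φq z t = 0 := by
          intro t ht
          set l : ℝ := (a + t) / 2 with hldef
          set u' : ℝ := (t + c) / 2 with hudef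
          have hl1 : a < l := by rw [hldef]; linarith [ht.1]
          have hl2 : l < t := by rw [hldef]; linarith [ht.1]
          have hu1 : t < u' := by rw [hudef]; linarith [ht.2]
          have hu2 : u' < c := by rw [hudef]; linarith [ht.2]
          have hlu : l < u' := hl2.trans hu1
          have hsubIoo : Set.Ioo l u' ⊆ Set.Ioo a c :=
            fun w hw => ⟨hl1.trans hw.1, hw.2.trans hu2⟩
          have hlI : l ∈ Set.Ioo a b := hsubc ⟨hl1, hl2.trans (hu1.trans hu2)⟩
          have hu'I : u' ∈ Set.Ioo a b := hsubc ⟨hl1.trans hlu, hu2⟩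
          have hgint : MeasureTheory.IntegrableOn
              (fun w => φq z w / (p w : ℂ) - (s w : ℂ) * φ z w) (Set.Ioc l u') :=
            (intervalIntegrable_iff_integrableOn_Ioc_of_le hlu.le).1
              ((hφ.sol z).fst u' hu'I l hlI).1
          have hval : ∀ w ∈ Set.Icc l u',
              ∫ t' in Set.Ioc l w, (φq z t' / (p t' : ℂ) - (s t' : ℂ) * φ z t') = 0 := by
            intro w hw
            have hwI : w ∈ Set.Ioo a b :=
              hsubc ⟨hl1.trans_le hw.1, lt_of_le_of_lt hw.2 hu2⟩
            have hrep := ((hφ.sol z).fst w hwI l hlI).2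
            rw [intervalIntegral.integral_of_le hw.1] at hrep
            rw [hφ0 w ⟨hl1.trans_le hw.1, lt_of_le_of_lt hw.2 hu2⟩,
              hφ0 l ⟨hl1, hl2.trans (hu1.trans hu2)⟩] at hrep
            simpa using hrep.symm
          have hae := ae_zero_of_int hgint hval
          have hφqae : ∀ᵐ w ∂(volume.restrict (Set.Ioo l u')), φq z w = 0 := by
            filter_upwards [hae,
              MeasureTheory.ae_restrict_of_ae_restrict_of_subset
                (fun w hw => hsubc (hsubIoo hw)) hyp.pne,
              MeasureTheory.ae_restrict_mem measurableSet_Ioo] with w h1 h2 h3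
            rw [hφ0 w (hsubIoo h3)] at h1
            simp only [mul_zero, sub_zero] at h1
            rcases div_eq_zero_iff.1 h1 with h | h
            · exact h
            · exact absurd (Complex.ofReal_eq_zero.1 h) h2
          exact cont_ae_zero (hczq.mono fun w hw => hsubc (hsubIoo hw)) hφqae t ⟨hl2, hu1⟩
        obtain ⟨x₀, hx₀I, hx₀ne⟩ := hφ.nontriv z
        set c' : ℝ := (a + c) / 2 with hc'def
        have hc'I : c' ∈ Set.Ioo a c := ⟨by rw [hc'def]; linarith, by rw [hc'def]; linarith⟩
        have hc'Iab : c' ∈ Set.Ioo a b := hsubc hc'I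
        rcases le_total x₀ c' with hle | hle
        · have hx₀ac : x₀ ∈ Set.Ioo a c := ⟨hx₀I.1, lt_of_le_of_lt hle hc'I.2⟩
          rcases hx₀ne with h | h
          · exact h (hφ0 x₀ hx₀ac)
          · exact h (hφq0 x₀ hx₀ac)
        · have := gronwall hyp (hφ.sol z) hc'Iab hx₀I hle (hφ0 c' hc'I) (hφq0 c' hc'I)
            x₀ ⟨hle, le_rfl⟩
          rcases hx₀ne with h | h
          · exact h this.1
          · exact h this.2
    have hA : dBE φ φq c z * conj (dBE φ φq c z) = ((‖dBE φ φq c z‖ ^ 2 : ℝ) : ℂ) := by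
      rw [Complex.mul_conj, Complex.normSq_eq_norm_sq]
    have hB : dBE φ φq c (conj z) * conj (dBE φ φq c (conj z))
        = ((‖dBE φ φq c (conj z)‖ ^ 2 : ℝ) : ℂ) := by
      rw [Complex.mul_conj, Complex.normSq_eq_norm_sq]
    have hEq : ((‖dBE φ φq c z‖ ^ 2 - ‖dBE φ φq c (conj z)‖ ^ 2 : ℝ) : ℂ)
        = ((4 * z.im * R : ℝ) : ℂ) := by
      rw [Complex.ofReal_sub, ← hA, ← hB, hid', hRe, Complex.sub_conj]
      push_cast
      linear_combination (-4 * (z.im : ℂ) * (R : ℂ)) * Complex.I_sq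
    have hreal_eq : ‖dBE φ φq c z‖ ^ 2 - ‖dBE φ φq c (conj z)‖ ^ 2 = 4 * z.im * R :=
      Complex.ofReal_inj.1 hEq
    have hlt : ‖dBE φ φq c (conj z)‖ ^ 2 < ‖dBE φ φq c z‖ ^ 2 := by nlinarith
    exact lt_of_pow_lt_pow_left₀ 2 (norm_nonneg _) hlt
end
end

section
/- Suppose $p=r=1$, $q,s\in L^1_{loc}$, $\tau$ regular at $a$, and let $\phi_z$ be the solution of $(\tau - z)u=0$ with $\phi_z(a)=0$, $\phi_z^{[1]}(a)=1$ (Dirichlet solution). Then for each $x\in(a,b)$, $\phi_z(x) = \frac{1}{2\sqrt{-z}} e^{\sqrt{-z}(x-a)}(1+o(1))$ and $\phi_z^{[1]}(x) = \frac{1}{2} e^{\sqrt{-z}(x-a)}(1+o(1))$ as $|z|\to\infty$ along any nonreal ray. -/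
open MeasureTheory Set Filter Complex Topology ComplexConjugate

set_option maxHeartbeats 1000000

noncomputable section

/-- The branch `√(-z) = (-z)^{1/2}` of the square root with positive real part for
`z` off the negative real axis. -/
def msqrt (z : ℂ) : ℂ := (-z) ^ (1 / 2 : ℂ)

/-- `(u, uq)` solves the system equivalent to `(τ - z) u = 0` (with `p = r = 1`,
`τ u = -(u' + s u)' + s (u' + s u) + q u`, quasi-derivative `uq = u' + s u`) on `[a,b)`
with the initial conditions `u(a) = d₁`, `u^{[1]}(a) = d₂` at the regular endpoint `a`. -/
structure RegSol (a b : ℝ) (q s : ℝ → ℝ) (z : ℂ) (u uq : ℝ → ℂ) (d₁ d₂ : ℂ) : Prop where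
  fst : ∀ x ∈ Set.Ico a b,
    IntervalIntegrable (fun t => uq t - (s t : ℂ) * u t) volume a x ∧
    u x = d₁ + ∫ t in a..x, (uq t - (s t : ℂ) * u t)
  snd : ∀ x ∈ Set.Ico a b,
    IntervalIntegrable (fun t => (s t : ℂ) * uq t + ((q t : ℂ) - z) * u t) volume a x ∧
    uq x = d₂ + ∫ t in a..x, ((s t : ℂ) * uq t + ((q t : ℂ) - z) * u t)

lemma msqrt_sq {z : ℂ} (hz : z ≠ 0) : (msqrt z) ^ 2 = -z := by
  have h : (-z) ≠ 0 := neg_ne_zero.mpr hz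
  rw [msqrt, sq, ← Complex.cpow_add _ _ h]
  norm_num

lemma msqrt_re_pos {z : ℂ} (hz : z.im ≠ 0) : 0 < (msqrt z).re := by
  have h : (-z) ≠ 0 := by
    intro h
    rw [neg_eq_zero] at h
    apply hz; rw [h]; simp
  rw [msqrt, Complex.cpow_def_of_ne_zero h, Complex.exp_re]
  have him : (Complex.log (-z) * (1 / 2 : ℂ)).im = (-z).arg / 2 := by
    simp [Complex.mul_im, Complex.log_im, Complex.log_re]; ring
  rw [him]
  have harg1 : -Real.pi < (-z).arg := Complex.neg_pi_lt_arg _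
  have harg2 : (-z).arg < Real.pi := by
    rcases lt_or_ge ((-z).arg) Real.pi with h1 | h1
    · exact h1
    · exfalso
      have := Complex.arg_le_pi (-z)
      have : (-z).arg = Real.pi := le_antisymm this h1
      rw [Complex.arg_eq_pi_iff] at this
      exact hz (by simpa [neg_eq_zero] using this.2)
  have hcos : 0 < Real.cos ((-z).arg / 2) := by
    apply Real.cos_pos_of_mem_Ioo
    constructor <;> [linarith [Real.pi_pos]; linarith [Real.pi_pos]]
  positivity

lemma msqrt_mul_ofReal {t : ℝ} (ht : 0 < t) {w : ℂ} (hw : w ≠ 0) :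
    msqrt ((t : ℂ) * w) = (Real.sqrt t : ℂ) * msqrt w := by
  have hw' : (-w) ≠ 0 := neg_ne_zero.mpr hw
  have h1 : -((t : ℂ) * w) = (t : ℂ) * (-w) := by ring
  rw [msqrt, msqrt, h1, Complex.cpow_def_of_ne_zero (by
        simp [ht.ne', hw]), Complex.cpow_def_of_ne_zero hw',
    Complex.log_ofReal_mul ht hw', add_mul, Complex.exp_add]
  congr 1
  have : ((Real.log t : ℂ) * (1 / 2 : ℂ)) = ((Real.log t / 2 : ℝ) : ℂ) := by
    push_cast; ring
  rw [this, ← Complex.ofReal_exp]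
  norm_cast
  rw [← Real.exp_log (Real.sqrt_pos.mpr ht), Real.log_sqrt ht.le]

lemma parts_exp_cont {a x : ℝ} (hax : a ≤ x) (c d : ℂ) {f : ℝ → ℂ} (hf : Continuous f) :
    Complex.exp (c * ((x : ℂ) - (a : ℂ))) * (d + ∫ t in a..x, f t)
      = d + ∫ y in a..x, Complex.exp (c * ((y : ℂ) - (a : ℂ)))
          * (f y + c * (d + ∫ t in a..y, f t)) := by
  set F : ℝ → ℂ := fun y => d + ∫ t in a..y, f t with hF
  set E : ℝ → ℂ := fun y : ℝ => Complex.exp (c * ((y : ℂ) - (a : ℂ))) with hE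
  have hFc : Continuous F := by
    apply continuous_const.add
    exact intervalIntegral.continuous_primitive (fun a b => hf.intervalIntegrable a b) a
  have hEder : ∀ y : ℝ, HasDerivAt E (c * E y) y := by
    intro y
    have h0 : HasDerivAt (fun y : ℝ => (y : ℂ)) 1 y := by
      simpa using (hasDerivAt_id y).ofReal_comp
    have h1 : HasDerivAt (fun y : ℝ => c * ((y : ℂ) - (a : ℂ))) c y := by
      simpa using ((h0.sub_const (a : ℂ)).const_mul c)
    simpa [hE, mul_comm] using h1.cexp
  have hFder : ∀ y : ℝ, HasDerivAt F (f y) y := by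
    intro y
    have := intervalIntegral.integral_hasDerivAt_right (hf.intervalIntegrable a y)
      (hf.stronglyMeasurable.stronglyMeasurableAtFilter) hf.continuousAt
    simpa [hF] using this.const_add d
  have hPder : ∀ y : ℝ, HasDerivAt (fun y => E y * F y) (E y * (f y + c * F y)) y := by
    intro y
    have := (hEder y).mul (hFder y)
    exact this.congr_deriv (by ring)
  have hcont : Continuous fun y => E y * (f y + c * F y) := by
    have : Continuous E := by continuity
    exact this.mul (hf.add (continuous_const.mul hFc))
  have := intervalIntegral.integral_eq_sub_of_hasDerivAt (fun y _ => hPder y)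
    (hcont.intervalIntegrable a x)
  rw [this]
  have hFa : F a = d := by simp [hF]
  have hEa : E a = 1 := by simp [hE]
  rw [hFa, hEa]
  show E x * F x = d + (E x * F x - 1 * d)
  ring

lemma parts_exp {a x : ℝ} (hax : a ≤ x) (c d : ℂ) {f : ℝ → ℂ}
    (hf : IntervalIntegrable f volume a x) :
    Complex.exp (c * ((x : ℂ) - (a : ℂ))) * (d + ∫ t in a..x, f t)
      = d + ∫ y in a..x, Complex.exp (c * ((y : ℂ) - (a : ℂ)))
          * (f y + c * (d + ∫ t in a..y, f t)) := by
  set E : ℝ → ℂ := fun y : ℝ => Complex.exp (c * ((y : ℂ) - (a : ℂ))) with hE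
  have hEcont : Continuous E := by continuity
  set M : ℝ := Real.exp (|c.re| * (x - a)) with hM
  have hM1 : ∀ y ∈ Set.Icc a x, ‖E y‖ ≤ M := by
    intro y hy
    rw [hE]
    simp only
    rw [Complex.norm_exp]
    apply Real.exp_le_exp.mpr
    have h0 : (c * ((y:ℂ) - (a:ℂ))).re = c.re * (y - a) := by
      simp [Complex.mul_re]
    rw [h0]
    have h1 : c.re * (y - a) ≤ |c.re| * (y - a) :=
      mul_le_mul_of_nonneg_right (le_abs_self _) (by linarith [hy.1])
    have h2 : |c.re| * (y - a) ≤ |c.re| * (x - a) :=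
      mul_le_mul_of_nonneg_left (by linarith [hy.2]) (abs_nonneg _)
    linarith
  have hM0 : 0 < M := Real.exp_pos _
  have hfy : ∀ y ∈ Set.Icc a x, IntervalIntegrable f volume a y := by
    intro y hy
    exact hf.mono_set (by rw [Set.uIcc_of_le hy.1, Set.uIcc_of_le hax]; exact Set.Icc_subset_Icc le_rfl hy.2)
  have key : ∀ ε : ℝ, 0 < ε →
      ‖Complex.exp (c * ((x : ℂ) - (a : ℂ))) * (d + ∫ t in a..x, f t)
        - (d + ∫ y in a..x, E y * (f y + c * (d + ∫ t in a..y, f t)))‖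
        ≤ (M * (2 + ‖c‖ * (x - a))) * ε := by
    intro ε hε
    have hf₀ : Integrable ((Set.Ioc a x).indicator f) volume := by
      rw [MeasureTheory.integrable_indicator_iff measurableSet_Ioc]
      exact (intervalIntegrable_iff_integrableOn_Ioc_of_le hax).mp hf
    obtain ⟨g, hgsupp, hgint, hgcont, hgInt⟩ :=
      hf₀.exists_hasCompactSupport_integral_sub_le hε
    -- approximation bound on subintervals
    have hsub : ∀ y ∈ Set.Icc a x, (∫ t in a..y, ‖f t - g t‖) ≤ ε := by
      intro y hy
      rw [intervalIntegral.integral_of_le hy.1]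
      have h1 : ∀ t ∈ Set.Ioc a y, ‖f t - g t‖ = ‖(Set.Ioc a x).indicator f t - g t‖ := by
        intro t ht
        rw [Set.indicator_of_mem (Set.Ioc_subset_Ioc le_rfl hy.2 ht)]
      rw [MeasureTheory.setIntegral_congr_fun measurableSet_Ioc h1]
      calc (∫ t in Set.Ioc a y, ‖(Set.Ioc a x).indicator f t - g t‖)
          ≤ ∫ t, ‖(Set.Ioc a x).indicator f t - g t‖ := by
            apply MeasureTheory.setIntegral_le_integral ((hf₀.sub hgInt).norm)
            filter_upwards with t using norm_nonneg _
        _ ≤ ε := hgint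
    have hgi : ∀ (y : ℝ), IntervalIntegrable g volume a y := fun y => hgcont.intervalIntegrable a y
    set Ff : ℝ → ℂ := fun y => d + ∫ t in a..y, f t with hFf
    set Fg : ℝ → ℂ := fun y => d + ∫ t in a..y, g t with hFg
    have hFfcont : ContinuousOn Ff (Set.Icc a x) := by
      apply ContinuousOn.add continuousOn_const
      have := intervalIntegral.continuousOn_primitive_interval' hf
        (Set.left_mem_uIcc (a := a) (b := x))
      rwa [Set.uIcc_of_le hax] at this
    have hFgcont : Continuous Fg := continuous_const.add
      (intervalIntegral.continuous_primitive hgcont.intervalIntegrable a)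
    have hFdiff : ∀ y ∈ Set.Icc a x, ‖Ff y - Fg y‖ ≤ ε := by
      intro y hy
      have : Ff y - Fg y = ∫ t in a..y, (f t - g t) := by
        rw [hFf, hFg]
        simp only
        rw [intervalIntegral.integral_sub (hfy y hy) (hgi y)]
        ring
      rw [this]
      calc ‖∫ t in a..y, (f t - g t)‖ ≤ ∫ t in a..y, ‖f t - g t‖ :=
            intervalIntegral.norm_integral_le_integral_norm hy.1
        _ ≤ ε := hsub y hy
    -- integrability of the two integrands
    have hIf : IntervalIntegrable (fun y => E y * (f y + c * Ff y)) volume a x := by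
      have hcFf : ContinuousOn (fun y => c * Ff y) (Set.uIcc a x) := by
        rw [Set.uIcc_of_le hax]; exact continuousOn_const.mul hFfcont
      exact IntervalIntegrable.continuousOn_mul (hf.add hcFf.intervalIntegrable)
        hEcont.continuousOn
    have hIg : IntervalIntegrable (fun y => E y * (g y + c * Fg y)) volume a x :=
      (hEcont.mul (hgcont.add (continuous_const.mul hFgcont))).intervalIntegrable a x
    have hcontkey := parts_exp_cont hax c d hgcont
    -- ‖LHS_f - LHS_g‖ ≤ M ε
    have h1 : ‖Complex.exp (c * ((x : ℂ) - (a : ℂ))) * Ff x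
        - Complex.exp (c * ((x : ℂ) - (a : ℂ))) * Fg x‖ ≤ M * ε := by
      rw [← mul_sub]
      rw [norm_mul]
      exact mul_le_mul (hM1 x ⟨hax, le_rfl⟩) (hFdiff x ⟨hax, le_rfl⟩) (norm_nonneg _) hM0.le
    -- ‖RHS_f - RHS_g‖
    have h2 : ‖(∫ y in a..x, E y * (f y + c * Ff y)) - ∫ y in a..x, E y * (g y + c * Fg y)‖
        ≤ M * ε + (M * (‖c‖ * ε)) * (x - a) := by
      rw [← intervalIntegral.integral_sub hIf hIg]
      have hdiffint : IntervalIntegrable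
          (fun y => E y * (f y + c * Ff y) - E y * (g y + c * Fg y)) volume a x := hIf.sub hIg
      calc ‖∫ y in a..x, (E y * (f y + c * Ff y) - E y * (g y + c * Fg y))‖
          ≤ ∫ y in a..x, ‖E y * (f y + c * Ff y) - E y * (g y + c * Fg y)‖ :=
            intervalIntegral.norm_integral_le_integral_norm hax
        _ ≤ ∫ y in a..x, (M * ‖f y - g y‖ + M * (‖c‖ * ε)) := by
            apply intervalIntegral.integral_mono_on hax hdiffint.norm
            · exact (((hf.sub (hgi x)).norm).const_mul M).add (intervalIntegrable_const)
            · intro y hy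
              have : E y * (f y + c * Ff y) - E y * (g y + c * Fg y)
                  = E y * ((f y - g y) + c * (Ff y - Fg y)) := by ring
              rw [this, norm_mul]
              have hEy := hM1 y hy
              calc ‖E y‖ * ‖(f y - g y) + c * (Ff y - Fg y)‖
                  ≤ M * (‖f y - g y‖ + ‖c‖ * ε) := by
                    apply mul_le_mul hEy _ (norm_nonneg _) hM0.le
                    calc ‖(f y - g y) + c * (Ff y - Fg y)‖
                        ≤ ‖f y - g y‖ + ‖c * (Ff y - Fg y)‖ := norm_add_le _ _
                      _ ≤ ‖f y - g y‖ + ‖c‖ * ε := by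
                          rw [norm_mul]
                          have := mul_le_mul_of_nonneg_left (hFdiff y hy) (norm_nonneg c)
                          linarith
                _ = M * ‖f y - g y‖ + M * (‖c‖ * ε) := by ring
        _ = M * (∫ y in a..x, ‖f y - g y‖) + (M * (‖c‖ * ε)) * (x - a) := by
            rw [intervalIntegral.integral_add (((hf.sub (hgi x)).norm).const_mul M)
              intervalIntegrable_const, intervalIntegral.integral_const_mul,
              intervalIntegral.integral_const, smul_eq_mul]
            ring
        _ ≤ M * ε + (M * (‖c‖ * ε)) * (x - a) := by
            have := hsub x ⟨hax, le_rfl⟩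
            have h0 : (0:ℝ) ≤ M := hM0.le
            nlinarith
    -- assemble
    have heq : Complex.exp (c * ((x : ℂ) - (a : ℂ))) * (d + ∫ t in a..x, f t)
        - (d + ∫ y in a..x, E y * (f y + c * (d + ∫ t in a..y, f t)))
        = (Complex.exp (c * ((x : ℂ) - (a : ℂ))) * Ff x
            - Complex.exp (c * ((x : ℂ) - (a : ℂ))) * Fg x)
          + ((∫ y in a..x, E y * (g y + c * Fg y)) - ∫ y in a..x, E y * (f y + c * Ff y)) := by
      have hck : Complex.exp (c * ((x : ℂ) - (a : ℂ))) * Fg x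
          = d + ∫ y in a..x, E y * (g y + c * Fg y) := hcontkey
      rw [hFf, hFg] at *
      linear_combination hck
    rw [heq]
    calc ‖(Complex.exp (c * ((x : ℂ) - (a : ℂ))) * Ff x
            - Complex.exp (c * ((x : ℂ) - (a : ℂ))) * Fg x)
          + ((∫ y in a..x, E y * (g y + c * Fg y)) - ∫ y in a..x, E y * (f y + c * Ff y))‖
        ≤ ‖Complex.exp (c * ((x : ℂ) - (a : ℂ))) * Ff x
            - Complex.exp (c * ((x : ℂ) - (a : ℂ))) * Fg x‖
          + ‖(∫ y in a..x, E y * (g y + c * Fg y)) - ∫ y in a..x, E y * (f y + c * Ff y)‖ :=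
          norm_add_le _ _
      _ ≤ M * ε + (M * ε + (M * (‖c‖ * ε)) * (x - a)) := by
          exact add_le_add h1 (by rw [norm_sub_rev]; exact h2)
      _ = M * (2 + ‖c‖ * (x - a)) * ε := by ring
  -- conclude
  have h0 : ‖Complex.exp (c * ((x : ℂ) - (a : ℂ))) * (d + ∫ t in a..x, f t)
      - (d + ∫ y in a..x, E y * (f y + c * (d + ∫ t in a..y, f t)))‖ ≤ 0 := by
    set D := ‖Complex.exp (c * ((x : ℂ) - (a : ℂ))) * (d + ∫ t in a..x, f t)
      - (d + ∫ y in a..x, E y * (f y + c * (d + ∫ t in a..y, f t)))‖ with hD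
    set C := M * (2 + ‖c‖ * (x - a)) with hCdef
    have hC : 0 < C := by
      have : (0:ℝ) ≤ ‖c‖ * (x - a) := mul_nonneg (norm_nonneg _) (by linarith)
      rw [hCdef]; nlinarith
    by_contra hcon
    push_neg at hcon
    have hk := key (D / (2 * C)) (by positivity)
    have heq2 : C * (D / (2 * C)) = D / 2 := by
      field_simp
    rw [heq2] at hk
    linarith
  have := norm_le_zero_iff.mp h0
  rw [sub_eq_zero] at this
  exact this

lemma gronwall_uniform {a x : ℝ} (hax : a ≤ x) {h : ℝ → ℝ}
    (hh : IntervalIntegrable h volume a x) (hh0 : ∀ y, 0 ≤ h y) :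
    ∃ C : ℝ, 1 ≤ C ∧ ∀ γ : ℝ → ℝ, ContinuousOn γ (Set.Icc a x) →
      (∀ y ∈ Set.Icc a x, 0 ≤ γ y) →
      (∀ y ∈ Set.Icc a x, γ y ≤ 1 + ∫ t in a..y, h t * γ t) →
      ∀ y ∈ Set.Icc a x, γ y ≤ C := by
  -- integrability of h on subintervals
  have hhy : ∀ y z : ℝ, y ∈ Set.Icc a x → z ∈ Set.Icc a x → IntervalIntegrable h volume y z := by
    intro y z hy hz
    apply hh.mono_set
    rw [Set.uIcc_of_le hax]
    exact Set.uIcc_subset_Icc hy hz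
  -- the primitive H and uniform continuity
  have hHcont : ContinuousOn (fun y => ∫ t in a..y, h t) (Set.Icc a x) := by
    have := intervalIntegral.continuousOn_primitive_interval' hh
      (Set.left_mem_uIcc (a := a) (b := x))
    rwa [Set.uIcc_of_le hax] at this
  have hunif := (isCompact_Icc (a := a) (b := x)).uniformContinuousOn_of_continuous hHcont
  rw [Metric.uniformContinuousOn_iff] at hunif
  obtain ⟨δ, hδ0, hδ⟩ := hunif (1/2) (by norm_num)
  -- choose N
  obtain ⟨N, hN0, hNδ⟩ : ∃ N : ℕ, 0 < N ∧ (x - a) / N < δ := by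
    obtain ⟨N, hN⟩ := exists_nat_gt ((x - a) / δ)
    refine ⟨N + 1, Nat.succ_pos _, ?_⟩
    rw [div_lt_iff₀ (by positivity)]
    have h1 : (x - a) / δ < (N:ℝ) + 1 := by push_cast at *; linarith
    rw [div_lt_iff₀ hδ0] at h1
    push_cast
    linarith
  set p : ℕ → ℝ := fun i => a + i * ((x - a) / N) with hp
  have hpa : p 0 = a := by simp [hp]
  have hpN : p N = x := by
    rw [hp]
    field_simp
    ring
  have hpmono : ∀ i j : ℕ, i ≤ j → p i ≤ p j := by
    intro i j hij
    rw [hp]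
    simp only
    have : (i:ℝ) ≤ (j:ℝ) := Nat.cast_le.mpr hij
    have h2 : (0:ℝ) ≤ (x - a) / N := div_nonneg (sub_nonneg.mpr hax) (Nat.cast_nonneg N)
    nlinarith
  have hpmem : ∀ i : ℕ, i ≤ N → p i ∈ Set.Icc a x := by
    intro i hi
    constructor
    · rw [← hpa]; exact hpmono 0 i (Nat.zero_le _)
    · rw [← hpN]; exact hpmono i N hi
  -- small integral on each piece
  have hsmall : ∀ i : ℕ, i < N → (∫ t in p i..p (i+1), h t) ≤ 1/2 := by
    intro i hi
    have h1 : p (i+1) - p i = (x - a) / N := by rw [hp]; push_cast; ring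
    have hd : dist (p (i+1)) (p i) < δ := by
      rw [Real.dist_eq, h1,
        _root_.abs_of_nonneg (div_nonneg (sub_nonneg.mpr hax) (Nat.cast_nonneg N))]
      exact hNδ
    have := hδ (p (i+1)) (hpmem _ hi) (p i) (hpmem _ hi.le) hd
    rw [Real.dist_eq] at this
    have heq : (∫ t in a..p (i+1), h t) - (∫ t in a..p i, h t) = ∫ t in p i..p (i+1), h t :=
      intervalIntegral.integral_interval_sub_left (hhy a (p (i+1)) ⟨le_rfl, hax⟩ (hpmem _ hi))
        (hhy a (p i) ⟨le_rfl, hax⟩ (hpmem _ hi.le))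
    have := (abs_le.mp this.le).2
    rw [heq] at this
    linarith
  -- Hx
  set Hx : ℝ := ∫ t in a..x, h t with hHx
  have hHx0 : 0 ≤ Hx := intervalIntegral.integral_nonneg hax (fun t _ => hh0 t)
  -- the recursive bound
  set c : ℕ → ℝ := fun i => Nat.rec (1:ℝ) (fun _ ci => 2 + 2 * Hx * ci) i with hc
  have hc0 : c 0 = 1 := rfl
  have hcs : ∀ i, c (i+1) = 2 + 2 * Hx * c i := fun i => rfl
  have hcpos : ∀ i, 1 ≤ c i := by
    intro i
    induction i with
    | zero => norm_num [hc0]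
    | succ i ih => rw [hcs]; nlinarith
  have hcmono : ∀ i, c i ≤ c (i+1) := by
    intro i
    induction i with
    | zero => rw [hcs, hc0]; nlinarith
    | succ i ih =>
      have e1 := hcs i
      have e2 := hcs (i+1)
      rw [e2, e1]
      nlinarith [hcpos i, hcpos (i+1)]
  refine ⟨c N, hcpos N, ?_⟩
  intro γ hγc hγ0 hineq
  -- main induction
  have main : ∀ i : ℕ, i ≤ N → ∀ y ∈ Set.Icc a (p i), γ y ≤ c i := by
    intro i
    induction i with
    | zero =>
      intro _ y hy
      rw [hpa] at hy
      have hya : y = a := le_antisymm hy.2 hy.1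
      have := hineq y (by rw [hya]; exact ⟨le_rfl, hax⟩)
      rw [hya] at this ⊢
      simpa [hc0] using this
    | succ i ih =>
      intro hiN y hy
      have hiN' : i ≤ N := (Nat.le_succ i).trans hiN
      have hIcc : Set.Icc a (p (i+1)) ⊆ Set.Icc a x :=
        Set.Icc_subset_Icc le_rfl (hpmem _ hiN).2
      -- max point on Icc a (p (i+1))
      have hne : (Set.Icc a (p (i+1))).Nonempty := ⟨a, le_rfl, (hpmem _ hiN).1⟩
      obtain ⟨y₀, hy₀mem, hy₀max'⟩ := (isCompact_Icc).exists_isMaxOn hne (hγc.mono hIcc)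
      have hy₀max : ∀ z ∈ Set.Icc a (p (i+1)), γ z ≤ γ y₀ := fun z hz => hy₀max' hz
      have hy₀ : γ y₀ ≤ c (i+1) := by
        rcases le_or_gt y₀ (p i) with hcase | hcase
        · calc γ y₀ ≤ c i := ih hiN' y₀ ⟨hy₀mem.1, hcase⟩
            _ ≤ c (i+1) := hcmono i
        · -- p i < y₀
          have hy₀x : y₀ ∈ Set.Icc a x := hIcc hy₀mem
          have hineq0 := hineq y₀ hy₀x
          -- split the integral
          have hintint : ∀ y z : ℝ, y ∈ Set.Icc a x → z ∈ Set.Icc a x →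
              IntervalIntegrable (fun t => h t * γ t) volume y z := by
            intro y' z' hy' hz'
            apply IntervalIntegrable.mul_continuousOn (hhy _ _ hy' hz')
            exact hγc.mono (Set.uIcc_subset_Icc hy' hz')
          have hsplit : (∫ t in a..y₀, h t * γ t)
              = (∫ t in a..p i, h t * γ t) + ∫ t in p i..y₀, h t * γ t := by
            rw [intervalIntegral.integral_add_adjacent_intervals
              (hintint a (p i) ⟨le_rfl, hax⟩ (hpmem _ hiN'))
              (hintint (p i) y₀ (hpmem _ hiN') hy₀x)]
          -- first piece
          have hfirst : (∫ t in a..p i, h t * γ t) ≤ Hx * c i := by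
            calc (∫ t in a..p i, h t * γ t) ≤ ∫ t in a..p i, h t * c i := by
                  apply intervalIntegral.integral_mono_on (hpmem _ hiN').1
                    (hintint a (p i) ⟨le_rfl, hax⟩ (hpmem _ hiN'))
                    ((hhy a (p i) ⟨le_rfl, hax⟩ (hpmem _ hiN')).mul_const _)
                  intro t ht
                  have htx : t ∈ Set.Icc a x := Set.Icc_subset_Icc le_rfl (hpmem _ hiN').2 ht
                  have := ih hiN' t ht
                  exact mul_le_mul_of_nonneg_left this (hh0 t)
              _ = (∫ t in a..p i, h t) * c i := by
                  rw [intervalIntegral.integral_mul_const]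
              _ ≤ Hx * c i := by
                  apply mul_le_mul_of_nonneg_right _ (by linarith [hcpos i])
                  apply intervalIntegral.integral_mono_interval le_rfl (hpmem _ hiN').1
                    (hpmem _ hiN').2 _ hh
                  filter_upwards with t using hh0 t
          -- second piece
          have hsecond : (∫ t in p i..y₀, h t * γ t) ≤ (1/2) * γ y₀ := by
            calc (∫ t in p i..y₀, h t * γ t) ≤ ∫ t in p i..y₀, h t * γ y₀ := by
                  apply intervalIntegral.integral_mono_on hcase.le
                    (hintint (p i) y₀ (hpmem _ hiN') hy₀x)
                    ((hhy (p i) y₀ (hpmem _ hiN') hy₀x).mul_const _)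
                  intro t ht
                  have htmem : t ∈ Set.Icc a (p (i+1)) :=
                    ⟨(hpmem _ hiN').1.trans ht.1, ht.2.trans hy₀mem.2⟩
                  exact mul_le_mul_of_nonneg_left (hy₀max t htmem) (hh0 t)
              _ = (∫ t in p i..y₀, h t) * γ y₀ := by
                  rw [intervalIntegral.integral_mul_const]
              _ ≤ (1/2) * γ y₀ := by
                  apply mul_le_mul_of_nonneg_right _ (hγ0 y₀ hy₀x)
                  calc (∫ t in p i..y₀, h t) ≤ ∫ t in p i..p (i+1), h t := by
                        apply intervalIntegral.integral_mono_interval le_rfl hcase.le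
                          hy₀mem.2 _ (hhy (p i) (p (i+1)) (hpmem _ hiN') (hpmem _ hiN))
                        filter_upwards with t using hh0 t
                    _ ≤ 1/2 := hsmall i (Nat.lt_of_succ_le hiN)
          rw [hsplit] at hineq0
          rw [hcs]
          nlinarith
      calc γ y ≤ γ y₀ := hy₀max y hy
        _ ≤ c (i+1) := hy₀
  intro y hy
  have := main N le_rfl y (by rwa [hpN])
  exact this

lemma main_est {a b x : ℝ} (hax : a < x) (hxb : x < b)
    {q s : ℝ → ℝ}
    (hqx : IntervalIntegrable q volume a x) (hsx : IntervalIntegrable s volume a x)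
    {Γ : ℝ} (hΓ1 : 1 ≤ Γ)
    (hgr : ∀ γ : ℝ → ℝ, ContinuousOn γ (Set.Icc a x) →
      (∀ y ∈ Set.Icc a x, 0 ≤ γ y) →
      (∀ y ∈ Set.Icc a x, γ y ≤ 1 + ∫ t in a..y, (|s t| + |q t|) * γ t) →
      ∀ y ∈ Set.Icc a x, γ y ≤ Γ)
    {z k : ℂ} (hk2 : k ^ 2 = -z) (hk1 : 1 ≤ k.re)
    {u v : ℝ → ℂ} (hsol : RegSol a b q s z u v 0 1) :
    ‖Complex.exp (-k * ((x:ℂ) - (a:ℂ))) * (k * u x + v x) - 1‖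
        ≤ (∫ y in a..x, |s y| *
            (Real.exp (-2 * k.re * (y - a)) *
              (1 + Γ * ∫ t in a..y, Real.exp (2 * k.re * (t - a)) * (|s t| + |q t|))))
          + Γ * ‖k‖⁻¹ * ∫ y in a..x, |q y|
    ∧ ∀ x' ∈ Set.Icc a x, ‖Complex.exp (-k * ((x':ℂ) - (a:ℂ))) * (v x' - k * u x')‖
        ≤ Real.exp (-2 * k.re * (x' - a)) *
            (1 + Γ * ∫ t in a..x', Real.exp (2 * k.re * (t - a)) * (|s t| + |q t|)) := by
  have hz : z = -k^2 := by linear_combination hk2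
  subst hz
  have hax' : a ≤ x := hax.le
  have hk0 : k ≠ 0 := by
    intro h
    rw [h] at hk1
    simp at hk1
    linarith
  have h2k0 : (2:ℂ) * k ≠ 0 := by simp [hk0]
  have hρ0 : (0:ℝ) ≤ k.re := by linarith
  have hknorm : 1 ≤ ‖k‖ := le_trans hk1 (by
    calc k.re ≤ |k.re| := le_abs_self _
      _ ≤ ‖k‖ := Complex.abs_re_le_norm k
      _ = ‖k‖ := rfl)
  have hmemIco : ∀ y ∈ Set.Icc a x, y ∈ Set.Ico a b := fun y hy => ⟨hy.1, lt_of_le_of_lt hy.2 hxb⟩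
  set f₁ : ℝ → ℂ := fun t => v t - (s t : ℂ) * u t with hf₁def
  set f₂ : ℝ → ℂ := fun t => (s t : ℂ) * v t + ((q t : ℂ) - (-k^2)) * u t with hf₂def
  have hu : ∀ y ∈ Set.Icc a x, u y = ∫ t in a..y, f₁ t := fun y hy => by
    have := (hsol.fst y (hmemIco y hy)).2
    rwa [zero_add] at this
  have hv : ∀ y ∈ Set.Icc a x, v y = 1 + ∫ t in a..y, f₂ t := fun y hy =>
    (hsol.snd y (hmemIco y hy)).2
  have hf₁ : ∀ y ∈ Set.Icc a x, IntervalIntegrable f₁ volume a y := fun y hy =>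
    (hsol.fst y (hmemIco y hy)).1
  have hf₂ : ∀ y ∈ Set.Icc a x, IntervalIntegrable f₂ volume a y := fun y hy =>
    (hsol.snd y (hmemIco y hy)).1
  -- continuity of u and v on [a,x]
  have hucont : ContinuousOn u (Set.Icc a x) := by
    have hprim : ContinuousOn (fun y => ∫ t in a..y, f₁ t) (Set.Icc a x) := by
      have := intervalIntegral.continuousOn_primitive_interval' (hf₁ x ⟨hax', le_rfl⟩)
        (Set.left_mem_uIcc (a := a) (b := x))
      rwa [Set.uIcc_of_le hax'] at this
    exact hprim.congr hu
  have hvcont : ContinuousOn v (Set.Icc a x) := by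
    have hprim : ContinuousOn (fun y => 1 + ∫ t in a..y, f₂ t) (Set.Icc a x) := by
      apply continuousOn_const.add
      have := intervalIntegral.continuousOn_primitive_interval' (hf₂ x ⟨hax', le_rfl⟩)
        (Set.left_mem_uIcc (a := a) (b := x))
      rwa [Set.uIcc_of_le hax'] at this
    exact hprim.congr hv
  -- the scaled functions
  set A : ℝ → ℂ := fun y => Complex.exp (-k * ((y:ℂ) - (a:ℂ))) * (k * u y + v y) with hAdef
  set B : ℝ → ℂ := fun y => Complex.exp (-k * ((y:ℂ) - (a:ℂ))) * (v y - k * u y) with hBdef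
  set IA : ℝ → ℂ := fun y => (s y : ℂ) * B y + (q y : ℂ) * ((2*k)⁻¹ * (A y - B y)) with hIAdef
  set IB : ℝ → ℂ := fun y => (s y : ℂ) * A y + (q y : ℂ) * ((2*k)⁻¹ * (A y - B y)) with hIBdef
  have hEcont : Continuous (fun y : ℝ => Complex.exp (-k * ((y:ℂ) - (a:ℂ)))) :=
    (continuous_const.mul (Complex.continuous_ofReal.sub continuous_const)).cexp
  have hAcont : ContinuousOn A (Set.Icc a x) :=
    (hEcont.continuousOn).mul ((continuousOn_const.mul hucont).add hvcont)
  have hBcont : ContinuousOn B (Set.Icc a x) :=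
    (hEcont.continuousOn).mul (hvcont.sub (continuousOn_const.mul hucont))
  -- combined integrand facts
  have hkuv : ∀ y ∈ Set.Icc a x, (1:ℂ) + (∫ t in a..y, (k * f₁ t + f₂ t)) = k * u y + v y := by
    intro y hy
    rw [intervalIntegral.integral_add ((hf₁ y hy).const_mul k) (hf₂ y hy),
      intervalIntegral.integral_const_mul, ← hu y hy, hv y hy]
    ring
  have hvku : ∀ y ∈ Set.Icc a x, (1:ℂ) + (∫ t in a..y, (f₂ t - k * f₁ t)) = v y - k * u y := by
    intro y hy
    rw [intervalIntegral.integral_sub (hf₂ y hy) ((hf₁ y hy).const_mul k),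
      intervalIntegral.integral_const_mul, ← hu y hy, hv y hy]
    ring
  -- the equation for A
  have EqA : ∀ x' ∈ Set.Icc a x, A x' = 1 + ∫ y in a..x', IA y := by
    intro x' hx'
    have hP := parts_exp hx'.1 (-k) 1 (((hf₁ x' hx').const_mul k).add (hf₂ x' hx'))
    rw [hkuv x' hx'] at hP
    rw [hAdef]
    beta_reduce
    rw [hP]
    congr 1
    apply intervalIntegral.integral_congr
    intro y hy
    rw [Set.uIcc_of_le hx'.1] at hy
    have hyx : y ∈ Set.Icc a x := ⟨hy.1, hy.2.trans hx'.2⟩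
    simp only [hkuv y hyx]
    simp only [hIAdef, hBdef, hAdef, hf₁def, hf₂def]
    field_simp
    ring
  -- the equation for B (in exponentially tilted form)
  have EqB : ∀ x' ∈ Set.Icc a x,
      Complex.exp (k * ((x':ℂ) - (a:ℂ))) * (v x' - k * u x')
        = 1 + ∫ y in a..x', Complex.exp (2 * k * ((y:ℂ) - (a:ℂ))) * IB y := by
    intro x' hx'
    have hP := parts_exp hx'.1 k 1 ((hf₂ x' hx').sub ((hf₁ x' hx').const_mul k))
    rw [hvku x' hx'] at hP
    rw [hP]
    congr 1
    apply intervalIntegral.integral_congr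
    intro y hy
    rw [Set.uIcc_of_le hx'.1] at hy
    have hyx : y ∈ Set.Icc a x := ⟨hy.1, hy.2.trans hx'.2⟩
    simp only [hvku y hyx]
    simp only [hIBdef, hBdef, hAdef, hf₁def, hf₂def]
    have he1 : Complex.exp (2 * k * ((y:ℂ) - (a:ℂ)))
        = Complex.exp (k * ((y:ℂ) - (a:ℂ))) * Complex.exp (k * ((y:ℂ) - (a:ℂ))) := by
      rw [← Complex.exp_add]; ring_nf
    have he2 : Complex.exp (-k * ((y:ℂ) - (a:ℂ)))
        = (Complex.exp (k * ((y:ℂ) - (a:ℂ))))⁻¹ := by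
      rw [← Complex.exp_neg]; ring_nf
    rw [he1, he2]
    have hene : Complex.exp (k * ((y:ℂ) - (a:ℂ))) ≠ 0 := Complex.exp_ne_zero _
    field_simp
    ring

  -- helper: norms of exponentials
  have hre : ∀ (c : ℂ) (y : ℝ), (c * ((y:ℂ) - (a:ℂ))).re = c.re * (y - a) := by
    intro c y
    simp [Complex.mul_re]
  have hnormexp : ∀ (c : ℂ) (y : ℝ),
      ‖Complex.exp (c * ((y:ℂ) - (a:ℂ)))‖ = Real.exp (c.re * (y - a)) := by
    intro c y
    rw [Complex.norm_exp, hre]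
  -- subinterval inclusion helper
  have hsub : ∀ y ∈ Set.Icc a x, Set.uIcc a y ⊆ Set.uIcc a x := by
    intro y hy
    rw [Set.uIcc_of_le hy.1, Set.uIcc_of_le hax']
    exact Set.Icc_subset_Icc le_rfl hy.2
  have hIccsub : ∀ y ∈ Set.Icc a x, Set.Icc a y ⊆ Set.Icc a x := by
    intro y hy
    exact Set.Icc_subset_Icc le_rfl hy.2
  have hsCx : IntervalIntegrable (fun t => (s t : ℂ)) volume a x := ⟨hsx.1.ofReal, hsx.2.ofReal⟩
  have hqCx : IntervalIntegrable (fun t => (q t : ℂ)) volume a x := ⟨hqx.1.ofReal, hqx.2.ofReal⟩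
  have hhx : IntervalIntegrable (fun t => |s t| + |q t|) volume a x := hsx.abs.add hqx.abs
  -- gamma
  set γ : ℝ → ℝ := fun y => max ‖A y‖ ‖B y‖ with hγdef
  have hγc : ContinuousOn γ (Set.Icc a x) := by
    have := hAcont.norm.sup hBcont.norm
    exact this
  have hγ0 : ∀ y ∈ Set.Icc a x, 0 ≤ γ y := fun y _ =>
    le_trans (norm_nonneg (A y)) (le_max_left _ _)
  have hγA : ∀ y, ‖A y‖ ≤ γ y := fun y => le_max_left _ _
  have hγB : ∀ y, ‖B y‖ ≤ γ y := fun y => le_max_right _ _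
  -- integrability of IA, IB
  have hIAint : ∀ y ∈ Set.Icc a x, IntervalIntegrable IA volume a y := by
    intro y hy
    simp only [hIAdef]
    apply IntervalIntegrable.add
    · exact (hsCx.mono_set (hsub y hy)).mul_continuousOn
        (hBcont.mono ((Set.uIcc_of_le hy.1).symm ▸ hIccsub y hy))
    · exact (hqCx.mono_set (hsub y hy)).mul_continuousOn
        (continuousOn_const.mul ((hAcont.sub hBcont).mono
          ((Set.uIcc_of_le hy.1).symm ▸ hIccsub y hy)))
  have hIBint : ∀ y ∈ Set.Icc a x, IntervalIntegrable IB volume a y := by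
    intro y hy
    simp only [hIBdef]
    apply IntervalIntegrable.add
    · exact (hsCx.mono_set (hsub y hy)).mul_continuousOn
        (hAcont.mono ((Set.uIcc_of_le hy.1).symm ▸ hIccsub y hy))
    · exact (hqCx.mono_set (hsub y hy)).mul_continuousOn
        (continuousOn_const.mul ((hAcont.sub hBcont).mono
          ((Set.uIcc_of_le hy.1).symm ▸ hIccsub y hy)))
  -- norm bounds on IA, IB
  have hABsub : ∀ y, ‖(2*k)⁻¹‖ * ‖A y - B y‖ ≤ ‖k‖⁻¹ * ((‖A y‖ + ‖B y‖)/2) := by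
    intro y
    rw [norm_inv, norm_mul]
    have h2 : ‖(2:ℂ)‖ = 2 := by norm_num
    rw [h2]
    have hABle : ‖A y - B y‖ ≤ ‖A y‖ + ‖B y‖ := norm_sub_le _ _
    have hkpos : (0:ℝ) < ‖k‖ := lt_of_lt_of_le one_pos hknorm
    rw [mul_inv, mul_comm (2:ℝ)⁻¹ ‖k‖⁻¹, mul_assoc]
    apply mul_le_mul_of_nonneg_left _ (by positivity)
    rw [div_eq_inv_mul]
    calc (2:ℝ)⁻¹ * ‖A y - B y‖ ≤ (2:ℝ)⁻¹ * (‖A y‖ + ‖B y‖) := by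
          apply mul_le_mul_of_nonneg_left hABle (by norm_num)
      _ = (2:ℝ)⁻¹ * (‖A y‖ + ‖B y‖) := rfl
  have hIAnorm : ∀ y, ‖IA y‖ ≤ (|s y| + |q y|) * γ y := by
    intro y
    have hγy : 0 ≤ γ y := le_trans (norm_nonneg (A y)) (le_max_left _ _)
    calc ‖IA y‖ ≤ ‖(s y : ℂ) * B y‖ + ‖(q y : ℂ) * ((2*k)⁻¹ * (A y - B y))‖ := norm_add_le _ _
      _ ≤ |s y| * γ y + |q y| * γ y := by
          simp only [norm_mul, Complex.norm_real, Real.norm_eq_abs]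
          apply add_le_add
          · exact mul_le_mul_of_nonneg_left (hγB y) (abs_nonneg _)
          · apply mul_le_mul_of_nonneg_left _ (abs_nonneg _)
            calc ‖(2*k)⁻¹‖ * ‖A y - B y‖ ≤ ‖k‖⁻¹ * ((‖A y‖ + ‖B y‖)/2) := hABsub y
              _ ≤ 1 * γ y := by
                  apply mul_le_mul (by
                    rw [inv_le_one_iff₀]; right; exact hknorm) (by
                    have := hγA y; have := hγB y; linarith) (by positivity) one_pos.le
              _ = γ y := one_mul _
      _ = (|s y| + |q y|) * γ y := by ring
  have hIBnorm : ∀ y, ‖IB y‖ ≤ (|s y| + |q y|) * γ y := by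
    intro y
    have hγy : 0 ≤ γ y := le_trans (norm_nonneg (A y)) (le_max_left _ _)
    calc ‖IB y‖ ≤ ‖(s y : ℂ) * A y‖ + ‖(q y : ℂ) * ((2*k)⁻¹ * (A y - B y))‖ := norm_add_le _ _
      _ ≤ |s y| * γ y + |q y| * γ y := by
          simp only [norm_mul, Complex.norm_real, Real.norm_eq_abs]
          apply add_le_add
          · exact mul_le_mul_of_nonneg_left (hγA y) (abs_nonneg _)
          · apply mul_le_mul_of_nonneg_left _ (abs_nonneg _)
            calc ‖(2*k)⁻¹‖ * ‖A y - B y‖ ≤ ‖k‖⁻¹ * ((‖A y‖ + ‖B y‖)/2) := hABsub y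
              _ ≤ 1 * γ y := by
                  apply mul_le_mul (by
                    rw [inv_le_one_iff₀]; right; exact hknorm) (by
                    have := hγA y; have := hγB y; linarith) (by positivity) one_pos.le
              _ = γ y := one_mul _
      _ = (|s y| + |q y|) * γ y := by ring
  -- integrability of (|s|+|q|)*γ and exp-weighted versions
  have hγcont_u : ∀ y ∈ Set.Icc a x, ContinuousOn γ (Set.uIcc a y) := by
    intro y hy
    exact hγc.mono ((Set.uIcc_of_le hy.1).symm ▸ hIccsub y hy)
  have hhγint : ∀ y ∈ Set.Icc a x, IntervalIntegrable (fun t => (|s t| + |q t|) * γ t) volume a y :=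
    fun y hy => (hhx.mono_set (hsub y hy)).mul_continuousOn (hγcont_u y hy)
  have hexpcont : ∀ (ρ : ℝ), Continuous (fun t : ℝ => Real.exp (ρ * (t - a))) := by
    intro ρ
    fun_prop
  have hehγint : ∀ y ∈ Set.Icc a x,
      IntervalIntegrable (fun t => Real.exp (2 * k.re * (t - a)) * ((|s t| + |q t|) * γ t))
        volume a y :=
    fun y hy => (hhγint y hy).continuousOn_mul ((hexpcont (2 * k.re)).continuousOn)
  have hehint : ∀ y ∈ Set.Icc a x,
      IntervalIntegrable (fun t => Real.exp (2 * k.re * (t - a)) * (|s t| + |q t|)) volume a y :=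
    fun y hy => (hhx.mono_set (hsub y hy)).continuousOn_mul ((hexpcont (2 * k.re)).continuousOn)
  -- bound for B
  have hBbound : ∀ y ∈ Set.Icc a x, ‖B y‖ ≤ Real.exp (-2 * k.re * (y - a)) *
      (1 + ∫ t in a..y, Real.exp (2 * k.re * (t - a)) * ((|s t| + |q t|) * γ t)) := by
    intro y hy
    have hBeq : B y = Complex.exp (-2 * k * ((y:ℂ) - (a:ℂ)))
        * (Complex.exp (k * ((y:ℂ) - (a:ℂ))) * (v y - k * u y)) := by
      simp only [hBdef]
      rw [← mul_assoc, ← Complex.exp_add]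
      ring_nf
    rw [hBeq, EqB y hy, norm_mul, hnormexp]
    have hre2 : (-2 * k).re = -2 * k.re := by simp
    rw [hre2]
    apply mul_le_mul_of_nonneg_left _ (Real.exp_nonneg _)
    calc ‖1 + ∫ t in a..y, Complex.exp (2 * k * ((t:ℂ) - (a:ℂ))) * IB t‖
        ≤ ‖(1:ℂ)‖ + ‖∫ t in a..y, Complex.exp (2 * k * ((t:ℂ) - (a:ℂ))) * IB t‖ :=
          norm_add_le _ _
      _ ≤ 1 + ∫ t in a..y, ‖Complex.exp (2 * k * ((t:ℂ) - (a:ℂ))) * IB t‖ := by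
          rw [norm_one]
          exact add_le_add le_rfl (intervalIntegral.norm_integral_le_integral_norm hy.1)
      _ ≤ 1 + ∫ t in a..y, Real.exp (2 * k.re * (t - a)) * ((|s t| + |q t|) * γ t) := by
          apply add_le_add le_rfl
          apply intervalIntegral.integral_mono_on hy.1 _ (hehγint y hy)
          · intro t _
            rw [norm_mul, hnormexp]
            have hre3 : (2 * k).re = 2 * k.re := by simp
            rw [hre3]
            exact mul_le_mul_of_nonneg_left (hIBnorm t) (Real.exp_nonneg _)
          · apply IntervalIntegrable.norm
            apply IntervalIntegrable.continuousOn_mul (hIBint y hy)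
            exact ((continuous_const.mul
              (Complex.continuous_ofReal.sub continuous_const)).cexp).continuousOn
  -- the Gronwall inequality for γ
  have hγineq : ∀ y ∈ Set.Icc a x, γ y ≤ 1 + ∫ t in a..y, (|s t| + |q t|) * γ t := by
    intro y hy
    have hnn : ∀ t ∈ Set.Icc a y, 0 ≤ (|s t| + |q t|) * γ t := by
      intro t ht
      have := hγ0 t (hIccsub y hy ht)
      positivity
    apply max_le
    · rw [EqA y hy]
      calc ‖1 + ∫ t in a..y, IA t‖ ≤ ‖(1:ℂ)‖ + ‖∫ t in a..y, IA t‖ := norm_add_le _ _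
        _ ≤ 1 + ∫ t in a..y, ‖IA t‖ := by
            rw [norm_one]
            exact add_le_add le_rfl (intervalIntegral.norm_integral_le_integral_norm hy.1)
        _ ≤ 1 + ∫ t in a..y, (|s t| + |q t|) * γ t := by
            apply add_le_add le_rfl
            apply intervalIntegral.integral_mono_on hy.1 (hIAint y hy).norm (hhγint y hy)
            intro t _
            exact hIAnorm t
    · calc ‖B y‖ ≤ Real.exp (-2 * k.re * (y - a)) *
            (1 + ∫ t in a..y, Real.exp (2 * k.re * (t - a)) * ((|s t| + |q t|) * γ t)) :=
            hBbound y hy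
        _ ≤ 1 + ∫ t in a..y, (|s t| + |q t|) * γ t := by
            rw [mul_add, mul_one]
            have he1 : Real.exp (-2 * k.re * (y - a)) ≤ 1 := by
              rw [← Real.exp_zero]
              apply Real.exp_le_exp.mpr
              have : 0 ≤ y - a := by linarith [hy.1]
              nlinarith
            apply add_le_add he1
            rw [← intervalIntegral.integral_const_mul]
            apply intervalIntegral.integral_mono_on hy.1 _ (hhγint y hy)
            · intro t ht
              rw [← mul_assoc, ← Real.exp_add]
              apply mul_le_of_le_one_left (hnn t ht)
              rw [← Real.exp_zero]
              apply Real.exp_le_exp.mpr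
              nlinarith [ht.2, hρ0]
            · exact (hehγint y hy).const_mul _
  have hγΓ : ∀ y ∈ Set.Icc a x, γ y ≤ Γ := hgr γ hγc hγ0 hγineq
  have hΓ0 : (0:ℝ) ≤ Γ := by linarith
  -- conclusion (ii)
  have hc2 : ∀ x' ∈ Set.Icc a x, ‖B x'‖ ≤ Real.exp (-2 * k.re * (x' - a)) *
      (1 + Γ * ∫ t in a..x', Real.exp (2 * k.re * (t - a)) * (|s t| + |q t|)) := by
    intro x' hx'
    calc ‖B x'‖ ≤ Real.exp (-2 * k.re * (x' - a)) *
          (1 + ∫ t in a..x', Real.exp (2 * k.re * (t - a)) * ((|s t| + |q t|) * γ t)) :=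
          hBbound x' hx'
      _ ≤ Real.exp (-2 * k.re * (x' - a)) *
          (1 + Γ * ∫ t in a..x', Real.exp (2 * k.re * (t - a)) * (|s t| + |q t|)) := by
          apply mul_le_mul_of_nonneg_left _ (Real.exp_nonneg _)
          apply add_le_add le_rfl
          calc (∫ t in a..x', Real.exp (2 * k.re * (t - a)) * ((|s t| + |q t|) * γ t))
              ≤ ∫ t in a..x', (Real.exp (2 * k.re * (t - a)) * (|s t| + |q t|)) * Γ := by
                apply intervalIntegral.integral_mono_on hx'.1 (hehγint x' hx')
                  ((hehint x' hx').mul_const _)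
                intro t ht
                rw [← mul_assoc]
                apply mul_le_mul_of_nonneg_left (hγΓ t (hIccsub x' hx' ht))
                positivity
            _ = Γ * ∫ t in a..x', Real.exp (2 * k.re * (t - a)) * (|s t| + |q t|) := by
                rw [intervalIntegral.integral_mul_const]
                ring
  refine ⟨?_, hc2⟩
  -- conclusion (i)
  have hAx : A x - 1 = ∫ y in a..x, IA y := by
    rw [EqA x ⟨hax', le_rfl⟩]
    ring
  -- continuity of the D function
  have hDcont : ContinuousOn (fun y => Real.exp (-2 * k.re * (y - a)) *
      (1 + Γ * ∫ t in a..y, Real.exp (2 * k.re * (t - a)) * (|s t| + |q t|))) (Set.Icc a x) := by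
    apply ContinuousOn.mul ((hexpcont (-2 * k.re)).continuousOn)
    apply ContinuousOn.add continuousOn_const
    apply ContinuousOn.mul continuousOn_const
    have := intervalIntegral.continuousOn_primitive_interval'
      (hehint x ⟨hax', le_rfl⟩) (Set.left_mem_uIcc (a := a) (b := x))
    rwa [Set.uIcc_of_le hax'] at this
  show ‖A x - 1‖ ≤ _
  rw [hAx]
  calc ‖∫ y in a..x, IA y‖ ≤ ∫ y in a..x, ‖IA y‖ :=
        intervalIntegral.norm_integral_le_integral_norm hax'
    _ ≤ ∫ y in a..x, (|s y| * (Real.exp (-2 * k.re * (y - a)) *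
          (1 + Γ * ∫ t in a..y, Real.exp (2 * k.re * (t - a)) * (|s t| + |q t|)))
          + |q y| * (Γ * ‖k‖⁻¹)) := by
        apply intervalIntegral.integral_mono_on hax' (hIAint x ⟨hax', le_rfl⟩).norm
        · apply IntervalIntegrable.add
          · exact hsx.abs.mul_continuousOn (hDcont.mono (by rw [Set.uIcc_of_le hax']))
          · exact (hqx.abs).mul_const _
        · intro y hy
          calc ‖IA y‖ ≤ ‖(s y : ℂ) * B y‖ + ‖(q y : ℂ) * ((2*k)⁻¹ * (A y - B y))‖ :=
                norm_add_le _ _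
            _ ≤ |s y| * (Real.exp (-2 * k.re * (y - a)) *
                  (1 + Γ * ∫ t in a..y, Real.exp (2 * k.re * (t - a)) * (|s t| + |q t|)))
                + |q y| * (Γ * ‖k‖⁻¹) := by
                simp only [norm_mul, Complex.norm_real, Real.norm_eq_abs]
                apply add_le_add
                · exact mul_le_mul_of_nonneg_left (hc2 y hy) (abs_nonneg _)
                · apply mul_le_mul_of_nonneg_left _ (abs_nonneg _)
                  calc ‖(2*k)⁻¹‖ * ‖A y - B y‖ ≤ ‖k‖⁻¹ * ((‖A y‖ + ‖B y‖)/2) := hABsub y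
                    _ ≤ ‖k‖⁻¹ * Γ := by
                        apply mul_le_mul_of_nonneg_left _ (by positivity)
                        have h1 := (hγA y).trans (hγΓ y hy)
                        have h2 := (hγB y).trans (hγΓ y hy)
                        linarith
                    _ = Γ * ‖k‖⁻¹ := by ring
    _ = (∫ y in a..x, |s y| * (Real.exp (-2 * k.re * (y - a)) *
          (1 + Γ * ∫ t in a..y, Real.exp (2 * k.re * (t - a)) * (|s t| + |q t|))))
        + Γ * ‖k‖⁻¹ * ∫ y in a..x, |q y| := by
        rw [intervalIntegral.integral_add
          (hsx.abs.mul_continuousOn (hDcont.mono (by rw [Set.uIcc_of_le hax'])))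
          ((hqx.abs).mul_const _), intervalIntegral.integral_mul_const]
        ring

/-- High-energy asymptotics of the Dirichlet solution `φ_z` (with `φ_z(a) = 0`,
`φ_z^{[1]}(a) = 1`): `φ_z(x) = (2√(-z))⁻¹ e^{√(-z)(x-a)} (1+o(1))` and
`φ_z^{[1]}(x) = ½ e^{√(-z)(x-a)} (1+o(1))` as `|z| → ∞` along any nonreal ray. -/
theorem dirichlet_solution_asymptotics {a b : ℝ} (hab : a < b) {q s : ℝ → ℝ}
    (hq : ∀ x ∈ Set.Ioo a b, IntervalIntegrable q volume a x)
    (hs : ∀ x ∈ Set.Ioo a b, IntervalIntegrable s volume a x)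
    {φ φq : ℂ → ℝ → ℂ} (hφ : ∀ z : ℂ, RegSol a b q s z (φ z) (φq z) 0 1)
    {x : ℝ} (hx : x ∈ Set.Ioo a b) {w : ℂ} (hw : w.im ≠ 0) :
    Tendsto (fun t : ℝ => φ ((t : ℂ) * w) x * (2 * msqrt ((t : ℂ) * w)) *
        Complex.exp (-(msqrt ((t : ℂ) * w)) * ((x : ℂ) - (a : ℂ)))) atTop (𝓝 1) ∧
    Tendsto (fun t : ℝ => φq ((t : ℂ) * w) x * 2 *
        Complex.exp (-(msqrt ((t : ℂ) * w)) * ((x : ℂ) - (a : ℂ)))) atTop (𝓝 1) := by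
  obtain ⟨hax, hxb⟩ := hx
  have hqx : IntervalIntegrable q volume a x := hq x ⟨hax, hxb⟩
  have hsx : IntervalIntegrable s volume a x := hs x ⟨hax, hxb⟩
  have hw0 : w ≠ 0 := fun h => hw (by rw [h]; simp)
  -- the square root along the ray
  set k₁ : ℂ := msqrt w with hk₁def
  have hρ₁ : 0 < k₁.re := msqrt_re_pos hw
  set kk : ℝ → ℂ := fun t => msqrt ((t:ℂ) * w) with hkkdef
  have hkt : ∀ t : ℝ, 0 < t → kk t = (Real.sqrt t : ℂ) * k₁ := fun t ht =>
    msqrt_mul_ofReal ht hw0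
  have hret : ∀ t : ℝ, 0 < t → (kk t).re = Real.sqrt t * k₁.re := by
    intro t ht
    rw [hkt t ht]
    simp [Complex.mul_re]
  have hnormt : ∀ t : ℝ, 0 < t → ‖kk t‖ = Real.sqrt t * ‖k₁‖ := by
    intro t ht
    rw [hkt t ht, norm_mul, Complex.norm_real, Real.norm_eq_abs,
      _root_.abs_of_nonneg (Real.sqrt_nonneg t)]
  have hk2t : ∀ t : ℝ, 0 < t → (kk t) ^ 2 = -((t:ℂ) * w) := by
    intro t ht
    exact msqrt_sq (by
      simp only [ne_eq, mul_eq_zero, not_or]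
      exact ⟨by exact_mod_cast ht.ne', hw0⟩)
  -- sqrt tendsto
  have hsqrt : Tendsto Real.sqrt atTop atTop := by
    apply (tendsto_rpow_atTop (y := (1/2:ℝ)) (by norm_num)).congr'
    filter_upwards [eventually_ge_atTop (0:ℝ)] with t ht
    exact (Real.sqrt_eq_rpow t).symm
  have hρtend : Tendsto (fun t => (kk t).re) atTop atTop := by
    apply Tendsto.congr' _ (hsqrt.atTop_mul_const hρ₁)
    filter_upwards [eventually_gt_atTop (0:ℝ)] with t ht
    exact (hret t ht).symm
  have hntend : Tendsto (fun t => ‖kk t‖) atTop atTop := by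
    apply tendsto_atTop_mono' atTop _ hρtend
    filter_upwards [eventually_gt_atTop (0:ℝ)] with t _
    calc (kk t).re ≤ |(kk t).re| := le_abs_self _
      _ ≤ ‖kk t‖ := Complex.abs_re_le_norm _
      _ = ‖kk t‖ := rfl
  have hinvtend : Tendsto (fun t => ‖kk t‖⁻¹) atTop (𝓝 0) := hntend.inv_tendsto_atTop
  -- Gronwall constant
  have hh : IntervalIntegrable (fun t => |s t| + |q t|) volume a x := hsx.abs.add hqx.abs
  obtain ⟨Γ, hΓ1, hgr⟩ := gronwall_uniform hax.le hh (fun y => by positivity)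
  have hΓ0 : (0:ℝ) ≤ Γ := by linarith
  -- the D function
  set D : ℝ → ℝ → ℝ := fun ρ y => Real.exp (-2 * ρ * (y - a)) *
      (1 + Γ * ∫ t in a..y, Real.exp (2 * ρ * (t - a)) * (|s t| + |q t|)) with hDdef
  have hhsuby : ∀ y ∈ Set.Icc a x, IntervalIntegrable (fun t => |s t| + |q t|) volume a y := by
    intro y hy
    apply hh.mono_set
    rw [Set.uIcc_of_le hy.1, Set.uIcc_of_le hax.le]
    exact Set.Icc_subset_Icc le_rfl hy.2
  have hehint : ∀ (ρ : ℝ), ∀ y ∈ Set.Icc a x,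
      IntervalIntegrable (fun t => Real.exp (2 * ρ * (t - a)) * (|s t| + |q t|)) volume a y := by
    intro ρ y hy
    exact (hhsuby y hy).continuousOn_mul (by fun_prop)
  have hD0 : ∀ (ρ : ℝ), ∀ y ∈ Set.Icc a x, 0 ≤ D ρ y := by
    intro ρ y hy
    apply mul_nonneg (Real.exp_nonneg _)
    have : 0 ≤ ∫ t in a..y, Real.exp (2 * ρ * (t - a)) * (|s t| + |q t|) :=
      intervalIntegral.integral_nonneg hy.1 (fun t _ => by positivity)
    nlinarith
  -- alternative form and bounds for D
  have hDalt : ∀ (ρ : ℝ), ∀ y ∈ Set.Icc a x, D ρ y = Real.exp (-2 * ρ * (y - a))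
      + Γ * ∫ t in a..y, Real.exp (-2 * ρ * (y - t)) * (|s t| + |q t|) := by
    intro ρ y hy
    rw [hDdef]
    simp only
    rw [mul_add, mul_one]
    congr 1
    rw [mul_left_comm, ← intervalIntegral.integral_const_mul]
    congr 1
    apply intervalIntegral.integral_congr
    intro t _
    simp only
    rw [← mul_assoc, ← Real.exp_add]
    ring_nf
  have hDbound : ∀ (ρ : ℝ), 0 ≤ ρ → ∀ y ∈ Set.Icc a x,
      D ρ y ≤ 1 + Γ * ∫ t in a..x, (|s t| + |q t|) := by
    intro ρ hρ y hy
    rw [hDalt ρ y hy]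
    have h1 : Real.exp (-2 * ρ * (y - a)) ≤ 1 := by
      rw [← Real.exp_zero]
      apply Real.exp_le_exp.mpr
      nlinarith [hy.1]
    have h2 : (∫ t in a..y, Real.exp (-2 * ρ * (y - t)) * (|s t| + |q t|))
        ≤ ∫ t in a..x, (|s t| + |q t|) := by
      calc (∫ t in a..y, Real.exp (-2 * ρ * (y - t)) * (|s t| + |q t|))
          ≤ ∫ t in a..y, (|s t| + |q t|) := by
            apply intervalIntegral.integral_mono_on hy.1 _ (hhsuby y hy)
            · intro t ht
              apply mul_le_of_le_one_left (by positivity)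
              rw [← Real.exp_zero]
              apply Real.exp_le_exp.mpr
              nlinarith [ht.2]
            · exact (hhsuby y hy).continuousOn_mul (by fun_prop)
        _ ≤ ∫ t in a..x, (|s t| + |q t|) := by
            apply intervalIntegral.integral_mono_interval le_rfl hy.1 hy.2 _ hh
            filter_upwards with t using by positivity
    nlinarith
  -- D tends to zero
  have hDlim : ∀ y ∈ Set.Ioc a x, Tendsto (fun ρ => D ρ y) atTop (𝓝 0) := by
    intro y hy
    have hyIcc : y ∈ Set.Icc a x := ⟨hy.1.le, hy.2⟩
    have hT1 : Tendsto (fun ρ : ℝ => Real.exp (-2 * ρ * (y - a))) atTop (𝓝 0) := by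
      have hlin : Tendsto (fun ρ : ℝ => -2 * ρ * (y - a)) atTop atBot := by
        have h1 : Tendsto (fun ρ : ℝ => (2 * (y - a)) * ρ) atTop atTop :=
          Tendsto.const_mul_atTop (by nlinarith [hy.1]) tendsto_id
        have h2 := tendsto_neg_atTop_atBot.comp h1
        apply h2.congr
        intro ρ
        simp only [Function.comp_apply]
        ring
      exact Real.tendsto_exp_atBot.comp hlin
    have hT2 : Tendsto (fun ρ : ℝ => ∫ t in a..y, Real.exp (-2 * ρ * (y - t)) * (|s t| + |q t|))
        atTop (𝓝 0) := by
      have h0 : (0:ℝ) = ∫ t in a..y, (0:ℝ) := by simp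
      rw [h0]
      apply intervalIntegral.tendsto_integral_filter_of_dominated_convergence
        (fun t => |s t| + |q t|)
      · filter_upwards with ρ
        apply AEStronglyMeasurable.mul
        · exact (Continuous.aestronglyMeasurable (by fun_prop))
        · exact ((hhsuby y hyIcc).1.aestronglyMeasurable).mono_measure
            (by rw [Set.uIoc_of_le hy.1.le])
      · filter_upwards [eventually_ge_atTop (0:ℝ)] with ρ hρ
        filter_upwards with t ht
        rw [Set.uIoc_of_le hy.1.le] at ht
        rw [norm_mul, Real.norm_eq_abs, Real.norm_eq_abs, Real.abs_exp,
          _root_.abs_of_nonneg (by positivity)]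
        apply mul_le_of_le_one_left (by positivity)
        rw [← Real.exp_zero]
        apply Real.exp_le_exp.mpr
        nlinarith [ht.2]
      · exact hhsuby y hyIcc
      · have hae : ∀ᵐ t : ℝ, t ≠ y := by
          rw [MeasureTheory.ae_iff]
          push_neg
          simpa using measure_singleton y
        filter_upwards [hae] with t hty ht
        rw [Set.uIoc_of_le hy.1.le] at ht
        have hty' : t < y := lt_of_le_of_ne ht.2 hty
        have : Tendsto (fun ρ : ℝ => Real.exp (-2 * ρ * (y - t))) atTop (𝓝 0) := by
          have hlin : Tendsto (fun ρ : ℝ => -2 * ρ * (y - t)) atTop atBot := by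
            have h1 : Tendsto (fun ρ : ℝ => (2 * (y - t)) * ρ) atTop atTop :=
              Tendsto.const_mul_atTop (by nlinarith) tendsto_id
            have h2 := tendsto_neg_atTop_atBot.comp h1
            apply h2.congr
            intro ρ
            simp only [Function.comp_apply]
            ring
          exact Real.tendsto_exp_atBot.comp hlin
        have := this.mul_const (|s t| + |q t|)
        simpa using this
    have hsum := hT1.add (hT2.const_mul Γ)
    have h00 : (0:ℝ) + Γ * 0 = 0 := by ring
    rw [h00] at hsum
    exact hsum.congr (fun ρ => (hDalt ρ y hyIcc).symm)

  -- apply the main estimate eventually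
  have hest : ∀ᶠ t : ℝ in atTop,
      (‖Complex.exp (-(kk t) * ((x:ℂ)-(a:ℂ))) * ((kk t) * φ ((t:ℂ)*w) x + φq ((t:ℂ)*w) x) - 1‖
        ≤ (∫ y in a..x, |s y| * D ((kk t).re) y) + Γ * ‖kk t‖⁻¹ * ∫ y in a..x, |q y|)
      ∧ ‖Complex.exp (-(kk t) * ((x:ℂ)-(a:ℂ))) * (φq ((t:ℂ)*w) x - (kk t) * φ ((t:ℂ)*w) x)‖
        ≤ D ((kk t).re) x := by
    filter_upwards [hρtend.eventually_ge_atTop 1, eventually_gt_atTop (0:ℝ)] with t h1 ht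
    have H := main_est hax hxb hqx hsx hΓ1 hgr (hk2t t ht) h1 (hφ ((t:ℂ)*w))
    exact ⟨H.1, H.2 x ⟨hax.le, le_rfl⟩⟩
  -- continuity of D in y
  have hDcont : ∀ ρ : ℝ, ContinuousOn (fun y => D ρ y) (Set.Icc a x) := by
    intro ρ
    apply ContinuousOn.mul (Continuous.continuousOn (by fun_prop))
    apply ContinuousOn.add continuousOn_const
    apply ContinuousOn.mul continuousOn_const
    have := intervalIntegral.continuousOn_primitive_interval' (hehint ρ x ⟨hax.le, le_rfl⟩)
      (Set.left_mem_uIcc (a := a) (b := x))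
    rwa [Set.uIcc_of_le hax.le] at this
  -- the s-weighted integral tends to zero
  have hTS : Tendsto (fun t => ∫ y in a..x, |s y| * D ((kk t).re) y) atTop (𝓝 0) := by
    have h0 : (0:ℝ) = ∫ y in a..x, (0:ℝ) := by simp
    rw [h0]
    apply intervalIntegral.tendsto_integral_filter_of_dominated_convergence
      (fun y => |s y| * (1 + Γ * ∫ t in a..x, (|s t| + |q t|)))
    · filter_upwards with t2
      rw [Set.uIoc_of_le hax.le]
      apply AEStronglyMeasurable.mul
      · have h := (hsx.1.aestronglyMeasurable).norm
        simpa only [Real.norm_eq_abs] using h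
      · exact ((hDcont _).mono Set.Ioc_subset_Icc_self).aestronglyMeasurable measurableSet_Ioc
    · filter_upwards [hρtend.eventually_ge_atTop 0] with t2 hρ2
      filter_upwards with y hy
      rw [Set.uIoc_of_le hax.le] at hy
      have hyIcc : y ∈ Set.Icc a x := ⟨hy.1.le, hy.2⟩
      rw [norm_mul, Real.norm_eq_abs, Real.norm_eq_abs, _root_.abs_abs,
        _root_.abs_of_nonneg (hD0 _ y hyIcc)]
      exact mul_le_mul_of_nonneg_left (hDbound _ hρ2 y hyIcc) (abs_nonneg _)
    · exact (hsx.abs).mul_const _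
    · filter_upwards with y hy
      rw [Set.uIoc_of_le hax.le] at hy
      have h1 := ((hDlim y hy).comp hρtend).const_mul |s y|
      rw [mul_zero] at h1
      exact h1
  have hTQ : Tendsto (fun t => Γ * ‖kk t‖⁻¹ * ∫ y in a..x, |q y|) atTop (𝓝 0) := by
    have h1 := (hinvtend.const_mul Γ).mul_const (∫ y in a..x, |q y|)
    rw [mul_zero, zero_mul] at h1
    exact h1
  -- B tends to zero
  have hTB : Tendsto (fun t => Complex.exp (-(kk t) * ((x:ℂ)-(a:ℂ)))
      * (φq ((t:ℂ)*w) x - (kk t) * φ ((t:ℂ)*w) x)) atTop (𝓝 0) := by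
    rw [tendsto_zero_iff_norm_tendsto_zero]
    apply squeeze_zero' (by filter_upwards with t using norm_nonneg _)
      (hest.mono fun t ht => ht.2)
    exact (hDlim x ⟨hax, le_rfl⟩).comp hρtend
  -- A tends to one
  have hTA : Tendsto (fun t => Complex.exp (-(kk t) * ((x:ℂ)-(a:ℂ)))
      * ((kk t) * φ ((t:ℂ)*w) x + φq ((t:ℂ)*w) x)) atTop (𝓝 1) := by
    rw [tendsto_iff_norm_sub_tendsto_zero]
    apply squeeze_zero' (by filter_upwards with t using norm_nonneg _)
      (hest.mono fun t ht => ht.1)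
    have h1 := hTS.add hTQ
    rw [add_zero] at h1
    exact h1
  constructor
  · have heq : ∀ t : ℝ, φ ((t:ℂ)*w) x * (2 * kk t)
        * Complex.exp (-(kk t) * ((x:ℂ)-(a:ℂ)))
        = Complex.exp (-(kk t) * ((x:ℂ)-(a:ℂ))) * ((kk t) * φ ((t:ℂ)*w) x + φq ((t:ℂ)*w) x)
          - Complex.exp (-(kk t) * ((x:ℂ)-(a:ℂ)))
            * (φq ((t:ℂ)*w) x - (kk t) * φ ((t:ℂ)*w) x) := by
      intro t; ring
    have h1 := hTA.sub hTB
    rw [sub_zero] at h1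
    exact h1.congr (fun t => (heq t).symm)
  · have heq : ∀ t : ℝ, φq ((t:ℂ)*w) x * 2
        * Complex.exp (-(kk t) * ((x:ℂ)-(a:ℂ)))
        = Complex.exp (-(kk t) * ((x:ℂ)-(a:ℂ))) * ((kk t) * φ ((t:ℂ)*w) x + φq ((t:ℂ)*w) x)
          + Complex.exp (-(kk t) * ((x:ℂ)-(a:ℂ)))
            * (φq ((t:ℂ)*w) x - (kk t) * φ ((t:ℂ)*w) x) := by
      intro t; ring
    have h1 := hTA.add hTB
    rw [add_zero] at h1
    exact h1.congr (fun t => (heq t).symm)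

end
end
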